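/- arXiv:2303.08167 — 8 statements merged into one kernel-verified Lean document; each statement's English description precedes it below -/
import Mathlib

section
/- There is a universal constant c > 0 such that for every integer k ≥ 1, hervecdisc(A_k) ≥ c · √k · detlb(A_k), where A_k is the 2^k × 2^k discrete Haar basis matrix. (Since A_k has n = 2^k columns, √k is of order √(log n).) -/
open scoped Kronecker

/-- The determinant lower bound: the max over `k ≥ 1` and `k × k` submatrices `B`
of `|det B| ^ (1/k)`. -/
noncomputable def detlb {m n : Type*} [Fintype m] [Fintype n] (A : Matrix m n ℝ) : ℝ :=
  sSup { t | ∃ k : ℕ, 0 < k ∧ ∃ r : Fin k → m, ∃ c : Fin k → n,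
    Function.Injective r ∧ Function.Injective c ∧
    t = |(A.submatrix r c).det| ^ ((k : ℝ)⁻¹) }

/-- The vector discrepancy: the minimum over assignments of unit vectors to the columns
of the maximal Euclidean norm of a signed row-sum. -/
noncomputable def vecdisc {m n : Type*} [Fintype m] [Fintype n] (A : Matrix m n ℝ) : ℝ :=
  sInf { t | ∃ v : n → EuclideanSpace ℝ n, (∀ j, ‖v j‖ = 1) ∧
    t = sSup { s | ∃ i : m, s = ‖∑ j, A i j • v j‖ } }

/-- The hereditary vector discrepancy: the max of `vecdisc` over all column restrictions. -/
noncomputable def hervecdisc {m n : Type*} [Fintype m] [Fintype n] (A : Matrix m n ℝ) : ℝ :=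
  sSup { t | ∃ S : Finset n,
    t = vecdisc (A.submatrix id (fun j : {j // j ∈ S} => (j : n))) }

/-- The `2^k × 2^k` discrete Haar basis matrix, defined recursively by `A_0 = [1]` and
`A_k = [[A_{k-1}, I], [A_{k-1}, -I]]`. -/
noncomputable def haar : (k : ℕ) → Matrix (Fin (2 ^ k)) (Fin (2 ^ k)) ℝ
  | 0 => Matrix.of fun _ _ => 1
  | k + 1 =>
      Matrix.reindex
        ((finSumFinEquiv (m := 2 ^ k) (n := 2 ^ k)).trans (finCongr (by rw [pow_succ, mul_two])))
        ((finSumFinEquiv (m := 2 ^ k) (n := 2 ^ k)).trans (finCongr (by rw [pow_succ, mul_two])))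
        (Matrix.fromBlocks (haar k) (1 : Matrix (Fin (2 ^ k)) (Fin (2 ^ k)) ℝ)
          (haar k) (-1 : Matrix (Fin (2 ^ k)) (Fin (2 ^ k)) ℝ))

/-! ### Auxiliary definitions and lemmas -/

open Matrix

/-- The index equivalence used in the recursive definition of `haar`. -/
noncomputable def haarE (k : ℕ) : Fin (2 ^ k) ⊕ Fin (2 ^ k) ≃ Fin (2 ^ (k + 1)) :=
  (finSumFinEquiv (m := 2 ^ k) (n := 2 ^ k)).trans (finCongr (by rw [pow_succ, mul_two]))

lemma haar_succ (k : ℕ) : haar (k + 1) =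
    Matrix.reindex (haarE k) (haarE k)
      (Matrix.fromBlocks (haar k) (1 : Matrix (Fin (2 ^ k)) (Fin (2 ^ k)) ℝ)
        (haar k) (-1 : Matrix (Fin (2 ^ k)) (Fin (2 ^ k)) ℝ)) := rfl

lemma haar_submatrix {k u : ℕ} (ρ : Fin u → Fin (2 ^ (k + 1))) (γ : Fin u → Fin (2 ^ (k + 1))) :
    (haar (k + 1)).submatrix ρ γ =
      (Matrix.fromBlocks (haar k) 1 (haar k) (-1)).submatrix
        (fun i => (haarE k).symm (ρ i)) (fun j => (haarE k).symm (γ j)) := by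
  ext i j
  simp [haar_succ, Matrix.reindex_apply, Matrix.submatrix_apply]

lemma sum_ind_le_one {s : ℕ} {α : Type*} [DecidableEq α] {f : Fin s → α}
    (hf : Function.Injective f) (x : α) :
    ∑ i : Fin s, (if f i = x then (1 : ℝ) else 0) ≤ 1 := by
  rw [Finset.sum_boole]
  have h : (Finset.univ.filter (fun i => f i = x)).card ≤ 1 :=
    Finset.card_le_one.mpr fun a ha b hb => by
      simp only [Finset.mem_filter] at ha hb
      exact hf (ha.2.trans hb.2.symm)
  exact_mod_cast h

/-- Every `s × s` submatrix of the Haar matrix has determinant at most `2 ^ s`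
in absolute value. -/
lemma haar_det_bound : ∀ k s (r : Fin s → Fin (2 ^ k)) (c : Fin s → Fin (2 ^ k)),
    Function.Injective r → Function.Injective c →
    |((haar k).submatrix r c).det| ≤ 2 ^ s := by
  intro k
  induction k with
  | zero =>
    intro s r c hr hc
    have hs : s ≤ 1 := by simpa using Fintype.card_le_of_injective r hr
    interval_cases s
    · simp [Matrix.det_fin_zero]
    · rw [Matrix.det_fin_one]
      simp [haar, Matrix.submatrix_apply]
  | succ k IH =>
    intro s
    induction s with
    | zero => intro r c _ _; simp [Matrix.det_fin_zero]
    | succ t IHt =>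
      intro r c hr hc
      set e := haarE k with he
      set F : Matrix (Fin (2 ^ k) ⊕ Fin (2 ^ k)) (Fin (2 ^ k) ⊕ Fin (2 ^ k)) ℝ :=
        Matrix.fromBlocks (haar k) 1 (haar k) (-1) with hF
      set r' : Fin (t + 1) → Fin (2 ^ k) ⊕ Fin (2 ^ k) := fun i => e.symm (r i) with hr'def
      set c' : Fin (t + 1) → Fin (2 ^ k) ⊕ Fin (2 ^ k) := fun j => e.symm (c j) with hc'def
      have hr' : Function.Injective r' := fun a b h => hr (e.symm.injective h)
      have hc' : Function.Injective c' := fun a b h => hc (e.symm.injective h)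
      have key : (haar (k + 1)).submatrix r c = F.submatrix r' c' := haar_submatrix r c
      by_cases hA : ∃ j0 b0, c' j0 = Sum.inr b0
      · obtain ⟨j0, b0, hj0⟩ := hA
        rw [key, Matrix.det_succ_column _ j0]
        have minor_bound : ∀ i : Fin (t + 1),
            |((F.submatrix r' c').submatrix i.succAbove j0.succAbove).det| ≤ 2 ^ t := by
          intro i
          have : (F.submatrix r' c').submatrix i.succAbove j0.succAbove
              = (haar (k + 1)).submatrix (r ∘ i.succAbove) (c ∘ j0.succAbove) := by
            rw [haar_submatrix]
            ext a b
            simp [Matrix.submatrix_apply, hr'def, hc'def, hF, he]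
          rw [this]
          exact IHt _ _ (hr.comp (Fin.succAbove_right_injective))
            (hc.comp (Fin.succAbove_right_injective))
        have entry_bound : ∀ i : Fin (t + 1),
            |F.submatrix r' c' i j0| ≤
              (if r' i = Sum.inl b0 then (1 : ℝ) else 0) +
              (if r' i = Sum.inr b0 then (1 : ℝ) else 0) := by
          intro i
          rw [Matrix.submatrix_apply, hj0]
          rcases hri : r' i with a | a
          · by_cases hab : a = b0
            · subst hab; simp [hF, Matrix.fromBlocks_apply₁₂, Matrix.one_apply]
            · simp [hF, Matrix.fromBlocks_apply₁₂, Matrix.one_apply, hab, Sum.inl.injEq]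
          · by_cases hab : a = b0
            · subst hab; simp [hF, Matrix.fromBlocks_apply₂₂]
            · simp [hF, Matrix.fromBlocks_apply₂₂, Matrix.one_apply, hab, Sum.inr.injEq]
        calc |∑ i : Fin (t + 1), (-1) ^ ((i : ℕ) + (j0 : ℕ)) * F.submatrix r' c' i j0 *
                ((F.submatrix r' c').submatrix i.succAbove j0.succAbove).det|
            ≤ ∑ i : Fin (t + 1), |(-1) ^ ((i : ℕ) + (j0 : ℕ)) * F.submatrix r' c' i j0 *
                ((F.submatrix r' c').submatrix i.succAbove j0.succAbove).det| :=
              Finset.abs_sum_le_sum_abs _ _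
          _ ≤ ∑ i : Fin (t + 1),
                ((if r' i = Sum.inl b0 then (1 : ℝ) else 0) +
                 (if r' i = Sum.inr b0 then (1 : ℝ) else 0)) * 2 ^ t := by
              apply Finset.sum_le_sum
              intro i _
              rw [abs_mul, abs_mul, abs_pow, abs_neg, abs_one, one_pow, one_mul]
              exact mul_le_mul (entry_bound i) (minor_bound i) (abs_nonneg _)
                (by positivity)
          _ = (∑ i : Fin (t + 1), (if r' i = Sum.inl b0 then (1 : ℝ) else 0)
              + ∑ i : Fin (t + 1), (if r' i = Sum.inr b0 then (1 : ℝ) else 0)) * 2 ^ t := by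
              rw [← Finset.sum_add_distrib, Finset.sum_mul]
          _ ≤ (1 + 1) * 2 ^ t := by
              apply mul_le_mul_of_nonneg_right _ (by positivity)
              exact add_le_add (sum_ind_le_one hr' _) (sum_ind_le_one hr' _)
          _ = 2 ^ (t + 1) := by ring
      · push_neg at hA
        have hcl : ∀ j, ∃ a, c' j = Sum.inl a := by
          intro j
          cases h : c' j with
          | inl a => exact ⟨a, rfl⟩
          | inr b => exact absurd h (hA j b)
        choose c₀ hc₀ using hcl
        have hc₀inj : Function.Injective c₀ := by
          intro a b h
          apply hc'
          rw [hc₀ a, hc₀ b, h]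
        have hM : (haar (k + 1)).submatrix r c
            = (haar k).submatrix (fun i => Sum.elim id id (r' i)) c₀ := by
          rw [key]
          ext i j
          rw [Matrix.submatrix_apply, Matrix.submatrix_apply, hc₀ j]
          rcases hri : r' i with a | a
          · simp [hF]
          · simp [hF]
        rw [hM]
        by_cases hinj : Function.Injective (fun i => Sum.elim id id (r' i))
        · exact IH (t + 1) _ _ hinj hc₀inj
        · obtain ⟨i1, i2, hval, hne⟩ := Function.not_injective_iff.mp hinj
          have hrows : ((haar k).submatrix (fun i => Sum.elim id id (r' i)) c₀) i1
              = ((haar k).submatrix (fun i => Sum.elim id id (r' i)) c₀) i2 := by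
            funext j
            simp only [Matrix.submatrix_apply]
            rw [hval]
          rw [Matrix.det_zero_of_row_eq hne hrows]
          simp

/-- The Gram matrix of the Haar matrix is diagonal, with trace `(k + 1) * 2 ^ k`. -/
lemma haar_gram : ∀ k, ∃ d : Fin (2 ^ k) → ℝ,
    (haar k)ᵀ * haar k = Matrix.diagonal d ∧ ∑ j, d j = ((k : ℝ) + 1) * 2 ^ k := by
  intro k
  induction k with
  | zero =>
    refine ⟨fun _ => 1, ?_, by simp⟩
    ext i j
    have hij : i = j := by
      have h1 := i.isLt
      have h2 := j.isLt
      simp only [pow_zero] at h1 h2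
      exact Fin.ext (by omega)
    subst hij
    simp [Matrix.mul_apply, haar, Matrix.transpose_apply, Matrix.diagonal_apply_eq]
  | succ k IH =>
    obtain ⟨d, hd, hs⟩ := IH
    set e := haarE k
    set F : Matrix (Fin (2 ^ k) ⊕ Fin (2 ^ k)) (Fin (2 ^ k) ⊕ Fin (2 ^ k)) ℝ :=
      Matrix.fromBlocks (haar k) 1 (haar k) (-1) with hF
    have hFtF : Fᵀ * F = Matrix.diagonal (Sum.elim (fun a => d a + d a) (fun _ => (2 : ℝ))) := by
      rw [hF, Matrix.fromBlocks_transpose, Matrix.fromBlocks_multiply]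
      rw [Matrix.transpose_one, Matrix.transpose_neg, Matrix.transpose_one]
      have h11 : (haar k)ᵀ * haar k + (haar k)ᵀ * haar k
          = Matrix.diagonal (fun a => d a + d a) := by
        rw [hd, Matrix.diagonal_add]
      have h12 : (haar k)ᵀ * 1 + (haar k)ᵀ * (-1)
          = (0 : Matrix (Fin (2 ^ k)) (Fin (2 ^ k)) ℝ) := by
        simp
      have h21 : 1 * haar k + (-1) * haar k = (0 : Matrix (Fin (2 ^ k)) (Fin (2 ^ k)) ℝ) := by
        simp
      have h22 : (1 : Matrix (Fin (2 ^ k)) (Fin (2 ^ k)) ℝ) * 1 + (-1) * (-1)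
          = Matrix.diagonal (fun _ => (2 : ℝ)) := by
        rw [one_mul, neg_one_mul, neg_neg, ← Matrix.diagonal_one, Matrix.diagonal_add]
        congr 1
        funext x
        norm_num [Pi.add_apply]
      rw [h11, h12, h21, h22, Matrix.fromBlocks_diagonal]
    refine ⟨fun j => Sum.elim (fun a => d a + d a) (fun _ => (2 : ℝ)) (e.symm j), ?_, ?_⟩
    · rw [haar_succ, Matrix.reindex_apply, Matrix.transpose_submatrix,
        Matrix.submatrix_mul_equiv, hFtF]
      ext i j
      by_cases hij : i = j
      · subst hij; simp [Matrix.submatrix_apply, Matrix.diagonal_apply_eq]; rfl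
      · have hne : e.symm i ≠ e.symm j := fun h => hij (e.symm.injective h)
        simp [Matrix.submatrix_apply, Matrix.diagonal_apply_ne _ hne,
          Matrix.diagonal_apply_ne _ hij]
        exact Matrix.diagonal_apply_ne _ hne
    · rw [Equiv.sum_comp e.symm (Sum.elim (fun a => d a + d a) (fun _ => (2 : ℝ)))]
      rw [Fintype.sum_sum_type]
      simp only [Sum.elim_inl, Sum.elim_inr]
      rw [Finset.sum_add_distrib, hs, Finset.sum_const, Finset.card_univ, Fintype.card_fin]
      push_cast [pow_succ]
      ring

/-- Lower bound for the vector discrepancy of a matrix whose Gram matrix is diagonal. -/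
lemma vecdisc_lower {m n : Type*} [Fintype m] [Fintype n] [Nonempty m] [Nonempty n]
    [DecidableEq n]
    (B : Matrix m n ℝ) (d : n → ℝ)
    (hG : ∀ j j', ∑ i, B i j * B i j' = if j = j' then d j else 0)
    (t : ℝ) (ht : 0 ≤ t) (hsum : t ^ 2 * Fintype.card m ≤ ∑ j, d j) :
    t ≤ vecdisc B := by
  apply le_csInf
  · obtain ⟨j0⟩ := ‹Nonempty n›
    exact ⟨_, ⟨fun _ => EuclideanSpace.single j0 (1 : ℝ),
      fun _ => by simp [EuclideanSpace.norm_single], rfl⟩⟩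
  · rintro b ⟨v, hv, rfl⟩
    have hkey : ∑ i, ‖∑ j, B i j • v j‖ ^ 2 = ∑ j, d j := by
      have step1 : ∀ i : m, ‖∑ j, B i j • v j‖ ^ 2
          = ∑ j, ∑ j', (B i j * B i j') * inner ℝ (v j) (v j') := by
        intro i
        rw [← real_inner_self_eq_norm_sq, sum_inner]
        simp only [inner_sum, real_inner_smul_left, real_inner_smul_right]
        exact Finset.sum_congr rfl fun j _ => Finset.sum_congr rfl fun j' _ => by ring
      calc ∑ i, ‖∑ j, B i j • v j‖ ^ 2
          = ∑ i, ∑ j, ∑ j', (B i j * B i j') * inner ℝ (v j) (v j') := by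
            exact Finset.sum_congr rfl fun i _ => step1 i
        _ = ∑ j, ∑ j', (∑ i, B i j * B i j') * inner ℝ (v j) (v j') := by
            rw [Finset.sum_comm]
            congr 1
            funext j
            rw [Finset.sum_comm]
            congr 1
            funext j'
            rw [Finset.sum_mul]
        _ = ∑ j, d j := by
            apply Finset.sum_congr rfl
            intro j _
            rw [Finset.sum_eq_single j]
            · rw [hG j j, if_pos rfl, real_inner_self_eq_norm_sq, hv j]
              norm_num
            · intro j' _ hj'
              rw [hG j j', if_neg (fun h => hj' h.symm), zero_mul]
            · intro h
              exact absurd (Finset.mem_univ j) h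
    have hex : ∃ i : m, t ≤ ‖∑ j, B i j • v j‖ := by
      have hle : ∑ _i : m, t ^ 2 ≤ ∑ i, ‖∑ j, B i j • v j‖ ^ 2 := by
        rw [hkey, Finset.sum_const, Finset.card_univ, nsmul_eq_mul]
        calc (Fintype.card m : ℝ) * t ^ 2 = t ^ 2 * Fintype.card m := by ring
          _ ≤ ∑ j, d j := hsum
      obtain ⟨i, -, hi⟩ := Finset.exists_le_of_sum_le Finset.univ_nonempty hle
      refine ⟨i, ?_⟩
      nlinarith [norm_nonneg (∑ j, B i j • v j)]
    obtain ⟨i, hi⟩ := hex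
    refine le_trans hi (le_csSup ?_ ⟨i, rfl⟩)
    have hset : { s | ∃ i : m, s = ‖∑ j, B i j • v j‖ }
        = Set.range (fun i : m => ‖∑ j, B i j • v j‖) := by
      ext x
      simp [Set.range, eq_comm]
    rw [hset]
    exact (Set.finite_range _).bddAbove

/-- There is a universal constant `c > 0` such that for every `k ≥ 1`,
`hervecdisc (A_k) ≥ c · √k · detlb (A_k)` for the discrete Haar basis matrix `A_k`. -/
theorem stmt2 : ∃ c : ℝ, 0 < c ∧ ∀ k : ℕ, 1 ≤ k →
    c * Real.sqrt k * detlb (haar k) ≤ hervecdisc (haar k) := by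
  refine ⟨1 / 2, by norm_num, ?_⟩
  intro k hk
  -- Step 1: detlb (haar k) ≤ 2
  have hdet : detlb (haar k) ≤ 2 := by
    unfold detlb
    apply Real.sSup_le _ (by norm_num)
    rintro x ⟨s, hs, r, c, hr, hc, rfl⟩
    have h := haar_det_bound k s r c hr hc
    have h2 : (0 : ℝ) ≤ |((haar k).submatrix r c).det| := abs_nonneg _
    calc |((haar k).submatrix r c).det| ^ ((s : ℝ)⁻¹)
        ≤ ((2 : ℝ) ^ s) ^ ((s : ℝ)⁻¹) := Real.rpow_le_rpow h2 h (by positivity)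
      _ = 2 := by
          rw [← Real.rpow_natCast 2 s, ← Real.rpow_mul (by norm_num),
            mul_inv_cancel₀ (by exact_mod_cast hs.ne' : (s : ℝ) ≠ 0), Real.rpow_one]
  -- Step 2: vecdisc of the full-column restriction is at least √(k+1)
  haveI hne : Nonempty (Fin (2 ^ k)) := ⟨⟨0, Nat.two_pow_pos k⟩⟩
  obtain ⟨d, hd, hsum⟩ := haar_gram k
  haveI : Nonempty {j // j ∈ (Finset.univ : Finset (Fin (2 ^ k)))} :=
    ⟨⟨⟨0, Nat.two_pow_pos k⟩, Finset.mem_univ _⟩⟩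
  set B : Matrix (Fin (2 ^ k)) {j // j ∈ (Finset.univ : Finset (Fin (2 ^ k)))} ℝ :=
    (haar k).submatrix id
      (fun j : {j // j ∈ (Finset.univ : Finset (Fin (2 ^ k)))} => (j : Fin (2 ^ k))) with hB
  have hG : ∀ j j' : {j // j ∈ (Finset.univ : Finset (Fin (2 ^ k)))},
      ∑ i, B i j * B i j' = if j = j' then d (j : Fin (2 ^ k)) else 0 := by
    intro j j'
    have h1 : ((haar k)ᵀ * haar k) (j : Fin (2 ^ k)) (j' : Fin (2 ^ k))
        = Matrix.diagonal d (j : Fin (2 ^ k)) (j' : Fin (2 ^ k)) := by rw [hd]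
    rw [Matrix.mul_apply] at h1
    simp only [Matrix.transpose_apply] at h1
    simp only [hB, Matrix.submatrix_apply, id]
    rw [h1, Matrix.diagonal_apply]
    by_cases h : j = j'
    · subst h; simp
    · rw [if_neg (fun hh => h (Subtype.ext hh)), if_neg h]
  have hsum2 : (Real.sqrt ((k : ℝ) + 1)) ^ 2 * Fintype.card (Fin (2 ^ k))
      ≤ ∑ j : {j // j ∈ (Finset.univ : Finset (Fin (2 ^ k)))}, d (j : Fin (2 ^ k)) := by
    rw [Real.sq_sqrt (by positivity), Fintype.card_fin]
    have hss : ∑ j : {j // j ∈ (Finset.univ : Finset (Fin (2 ^ k)))}, d (j : Fin (2 ^ k))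
        = ∑ j, d j := Finset.sum_coe_sort Finset.univ d
    rw [hss, hsum]
    push_cast
    exact le_rfl
  have hv : Real.sqrt ((k : ℝ) + 1) ≤ vecdisc B :=
    vecdisc_lower B (fun j => d (j : Fin (2 ^ k))) hG _ (Real.sqrt_nonneg _) hsum2
  -- Step 3: vecdisc B ≤ hervecdisc (haar k)
  have hher : vecdisc B ≤ hervecdisc (haar k) := by
    unfold hervecdisc
    apply le_csSup
    · have hset : { t | ∃ S : Finset (Fin (2 ^ k)),
          t = vecdisc ((haar k).submatrix id (fun j : {j // j ∈ S} => (j : Fin (2 ^ k)))) }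
          = Set.range (fun S : Finset (Fin (2 ^ k)) =>
              vecdisc ((haar k).submatrix id (fun j : {j // j ∈ S} => (j : Fin (2 ^ k))))) := by
        ext x
        simp [Set.range, eq_comm]
      rw [hset]
      exact (Set.finite_range _).bddAbove
    · exact ⟨Finset.univ, rfl⟩
  -- Combine
  have hsq : Real.sqrt k ≤ Real.sqrt ((k : ℝ) + 1) := Real.sqrt_le_sqrt (by linarith)
  calc 1 / 2 * Real.sqrt k * detlb (haar k)
      ≤ 1 / 2 * Real.sqrt k * 2 :=
        mul_le_mul_of_nonneg_left hdet (by positivity)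
    _ = Real.sqrt k := by ring
    _ ≤ Real.sqrt ((k : ℝ) + 1) := hsq
    _ ≤ vecdisc B := hv
    _ ≤ hervecdisc (haar k) := hher
end

section
/- For every positive integer N and every real matrix A, detlb(P_N ⊗ A) ≤ √(eN) · detlb(A), where ⊗ denotes the Kronecker product. -/
open scoped Kronecker

/-- The `2^N × N` power matrix whose rows are the indicator vectors of all `2^N` subsets
of `[N]` (row `i` is the indicator of the binary representation of `i`). -/
noncomputable def powerMatrix (N : ℕ) : Matrix (Fin (2 ^ N)) (Fin N) ℝ :=
  Matrix.of fun i j => if Nat.testBit (i : ℕ) (j : ℕ) then 1 else 0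

open Matrix Finset

lemma psd_det_nonneg {n : Type*} [Fintype n] [DecidableEq n] {A : Matrix n n ℝ}
    (hA : A.PosSemidef) : 0 ≤ A.det := by
  rw [hA.isHermitian.det_eq_prod_eigenvalues]
  exact Finset.prod_nonneg fun i _ => hA.eigenvalues_nonneg i

lemma psd_posDef_of_det_ne_zero {n : Type*} [Fintype n] [DecidableEq n] {A : Matrix n n ℝ}
    (hA : A.PosSemidef) (h : A.det ≠ 0) : A.PosDef := by
  refine ⟨hA.isHermitian, fun x hx => ?_⟩
  rcases lt_or_eq_of_le (hA.2 x) with h1 | h1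
  · exact h1
  · exfalso
    have h2 : A *ᵥ x = 0 := (hA.dotProduct_mulVec_zero_iff x).mp (by
      have := h1.symm; simpa [dotProduct, mulVec, Finsupp.sum_fintype, Finset.mul_sum, mul_assoc] using this)
    exact h (Matrix.exists_mulVec_eq_zero_iff.mp ⟨x, fun h' => hx (Finsupp.coe_eq_zero.mp h'), h2⟩)

lemma det_one_add_psd {n : Type*} [Fintype n] [DecidableEq n] {W : Matrix n n ℝ}
    (hW : W.PosSemidef) : 1 ≤ (1 + W).det := by
  have hH := hW.isHermitian
  set U : Matrix n n ℝ := (hH.eigenvectorUnitary : Matrix n n ℝ)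
  have hU : U * star U = 1 := Matrix.mem_unitaryGroup_iff.mp hH.eigenvectorUnitary.2
  have hspec : W = U * Matrix.diagonal (RCLike.ofReal ∘ hH.eigenvalues) * star U :=
    hH.spectral_theorem
  have h1 : (1 : Matrix n n ℝ) + W = U * (1 + Matrix.diagonal (RCLike.ofReal ∘ hH.eigenvalues)) * star U := by
    rw [mul_add, add_mul, ← hspec, mul_one, hU]
  rw [h1, Matrix.det_mul, Matrix.det_mul]
  have hdetU : U.det * (star U).det = 1 := by
    rw [← Matrix.det_mul, hU, Matrix.det_one]
  have : U.det * ((1 : Matrix n n ℝ) + Matrix.diagonal (RCLike.ofReal ∘ hH.eigenvalues)).det * (star U).det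
      = ((1 : Matrix n n ℝ) + Matrix.diagonal (RCLike.ofReal ∘ hH.eigenvalues)).det * (U.det * (star U).det) := by ring
  rw [this, hdetU, mul_one]
  have : (1 : Matrix n n ℝ) + Matrix.diagonal (RCLike.ofReal ∘ hH.eigenvalues)
      = Matrix.diagonal (fun i => 1 + hH.eigenvalues i) := by
    rw [← Matrix.diagonal_one, Matrix.diagonal_add]
    congr 1
  rw [this, Matrix.det_diagonal]
  calc (1:ℝ) = ∏ _i : n, 1 := by simp
  _ ≤ ∏ i : n, (1 + hH.eigenvalues i) :=
    Finset.prod_le_prod (fun i _ => zero_le_one) (fun i _ => by linarith [hW.eigenvalues_nonneg i])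

lemma det_le_det_add_psd {n : Type*} [Fintype n] [DecidableEq n] {X S : Matrix n n ℝ} (hX : X.PosSemidef) (hS : S.PosSemidef) :
    X.det ≤ (X + S).det := by
  by_cases h0 : X.det = 0
  · rw [h0]; exact psd_det_nonneg (hX.add hS)
  · set R := (open scoped MatrixOrder in CFC.sqrt X) with hRdef
    have hR : R.PosSemidef := by
      open scoped MatrixOrder in exact Matrix.nonneg_iff_posSemidef.mp (CFC.sqrt_nonneg X)
    have hRR : R * R = X := by
      open scoped MatrixOrder in exact CFC.sqrt_mul_sqrt_self X (Matrix.nonneg_iff_posSemidef.mpr hX)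
    have hdetR : R.det * R.det = X.det := by rw [← Matrix.det_mul, hRR]
    have hRne : R.det ≠ 0 := fun h => h0 (by rw [← hdetR, h, mul_zero])
    have hRu : IsUnit R.det := isUnit_iff_ne_zero.mpr hRne
    have hRHerm : Rᴴ = R := hR.isHermitian
    set W := R⁻¹ * S * R⁻¹ with hWdef
    have hWpsd : W.PosSemidef := by
      have h1 : ((R⁻¹)ᴴ * S * R⁻¹).PosSemidef := hS.conjTranspose_mul_mul_same R⁻¹
      rwa [Matrix.conjTranspose_nonsing_inv, hRHerm] at h1
    have key : R * (1 + W) * R = X + S := by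
      rw [mul_add, mul_one, add_mul, hRR, hWdef]
      congr 1
      calc R * (R⁻¹ * S * R⁻¹) * R = R * R⁻¹ * S * (R⁻¹ * R) := by
            simp only [Matrix.mul_assoc]
        _ = S := by rw [Matrix.mul_nonsing_inv _ hRu, Matrix.nonsing_inv_mul _ hRu, one_mul, mul_one]
    calc X.det = X.det * 1 := (mul_one _).symm
      _ ≤ X.det * (1 + W).det := by
          apply mul_le_mul_of_nonneg_left (det_one_add_psd hWpsd) (psd_det_nonneg hX)
      _ = (X + S).det := by rw [← key, Matrix.det_mul, Matrix.det_mul, ← hdetR]; ring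

lemma det_gram_comp_equiv {ι : Type*} [Fintype ι] {κ κ' κ'' : Type*} [Fintype κ'] [Fintype κ''] [DecidableEq κ']
    [DecidableEq κ''] (M : Matrix ι κ ℝ) (v : κ'' → κ) (ee : κ' ≃ κ'') :
    ((M.submatrix id (v ∘ ee))ᴴ * M.submatrix id (v ∘ ee)).det
      = ((M.submatrix id v)ᴴ * M.submatrix id v).det := by
  have h : (M.submatrix id (v ∘ ee))ᴴ * M.submatrix id (v ∘ ee)
      = ((M.submatrix id v)ᴴ * M.submatrix id v).submatrix ee ee := by
    ext a b
    simp [Matrix.mul_apply, Matrix.conjTranspose_apply]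
  rw [h, Matrix.det_submatrix_equiv_self]

lemma gram_fischer_two {ι : Type*} [Fintype ι] {κ₁ κ₂ : Type*} [Fintype κ₁] [Fintype κ₂] [DecidableEq κ₁] [DecidableEq κ₂]
    (M : Matrix ι (κ₁ ⊕ κ₂) ℝ) :
    (Mᴴ * M).det ≤ ((M.submatrix id Sum.inl)ᴴ * M.submatrix id Sum.inl).det *
      ((M.submatrix id Sum.inr)ᴴ * M.submatrix id Sum.inr).det := by
  set C := M.submatrix id (Sum.inl : κ₁ → κ₁ ⊕ κ₂) with hC
  set D := M.submatrix id (Sum.inr : κ₂ → κ₁ ⊕ κ₂) with hD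
  have hGram : Mᴴ * M = fromBlocks (Cᴴ * C) (Cᴴ * D) (Dᴴ * C) (Dᴴ * D) := by
    ext a b
    cases a <;> cases b <;>
      simp [Matrix.mul_apply, Matrix.conjTranspose_apply, Matrix.fromBlocks, hC, hD]
  by_cases hdet : (Cᴴ * C).det = 0
  · have hMdet : (Mᴴ * M).det = 0 := by
      obtain ⟨v, hv0, hv⟩ := Matrix.exists_mulVec_eq_zero_iff.mpr hdet
      have hCv : C *ᵥ v = 0 := by
        have h1 : (C *ᵥ v) ⬝ᵥ (C *ᵥ v) = 0 := by
          have : v ⬝ᵥ ((Cᴴ * C) *ᵥ v) = (C *ᵥ v) ⬝ᵥ (C *ᵥ v) := by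
            rw [← Matrix.mulVec_mulVec, Matrix.dotProduct_mulVec]
            congr 1
            have : Cᴴ = Cᵀ := by ext i j; simp [Matrix.conjTranspose_apply]
            rw [this, Matrix.vecMul_transpose]
          rw [← this, hv, dotProduct_zero]
        exact dotProduct_self_eq_zero.mp h1
      set w : κ₁ ⊕ κ₂ → ℝ := Sum.elim v 0 with hw
      have hw0 : w ≠ 0 := by
        intro h
        exact hv0 (funext fun a => congrFun h (Sum.inl a))
      have hMw : M *ᵥ w = 0 := by
        have : M *ᵥ w = C *ᵥ v := by
          ext i
          simp only [Matrix.mulVec, dotProduct, Fintype.sum_sum_type, hw,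
            Sum.elim_inl, Sum.elim_inr, Pi.zero_apply, mul_zero, Finset.sum_const_zero, add_zero, hC,
            Matrix.submatrix_apply, id_eq]
        rw [this, hCv]
      apply Matrix.exists_mulVec_eq_zero_iff.mp
      exact ⟨w, hw0, by rw [← Matrix.mulVec_mulVec, hMw, Matrix.mulVec_zero]⟩
    rw [hMdet, hdet, zero_mul]
  · have hCC : (Cᴴ * C).PosSemidef := Matrix.posSemidef_conjTranspose_mul_self C
    have hPD : (Cᴴ * C).PosDef := by
      refine ⟨hCC.isHermitian, fun x hx => ?_⟩
      rcases lt_or_eq_of_le (hCC.2 x) with h1 | h1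
      · exact h1
      · exact absurd (Matrix.exists_mulVec_eq_zero_iff.mp
          ⟨x, fun h' => hx (Finsupp.coe_eq_zero.mp h'), (hCC.dotProduct_mulVec_zero_iff x).mp (by
            have := h1.symm; simpa [dotProduct, mulVec, Finsupp.sum_fintype, Finset.mul_sum, mul_assoc] using this)⟩) hdet
    haveI : Invertible (Cᴴ * C) := Matrix.invertibleOfIsUnitDet _ (isUnit_iff_ne_zero.mpr hdet)
    have hGpsd : (fromBlocks (Cᴴ * C) (Cᴴ * D) ((Cᴴ * D)ᴴ) (Dᴴ * D)).PosSemidef := by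
      have : (Cᴴ * D)ᴴ = Dᴴ * C := by
        rw [Matrix.conjTranspose_mul, Matrix.conjTranspose_conjTranspose]
      rw [this, ← hGram]
      exact Matrix.posSemidef_conjTranspose_mul_self M
    have hSchur : (Dᴴ * D - (Cᴴ * D)ᴴ * (Cᴴ * C)⁻¹ * (Cᴴ * D)).PosSemidef :=
      (Matrix.PosDef.fromBlocks₁₁ (Cᴴ * D) (Dᴴ * D) hPD).mp hGpsd
    have hS : ((Cᴴ * D)ᴴ * (Cᴴ * C)⁻¹ * (Cᴴ * D)).PosSemidef :=
      hCC.inv.conjTranspose_mul_mul_same (Cᴴ * D)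
    have hdetblocks : (Mᴴ * M).det
        = (Cᴴ * C).det * (Dᴴ * D - (Cᴴ * D)ᴴ * (Cᴴ * C)⁻¹ * (Cᴴ * D)).det := by
      rw [hGram]
      have h2 : Dᴴ * C = (Cᴴ * D)ᴴ := by
        rw [Matrix.conjTranspose_mul, Matrix.conjTranspose_conjTranspose]
      rw [h2, Matrix.det_fromBlocks₁₁, Matrix.invOf_eq_nonsing_inv]
    rw [hdetblocks]
    apply mul_le_mul_of_nonneg_left _ (psd_det_nonneg hCC)
    have := det_le_det_add_psd hSchur hS
    rwa [sub_add_cancel] at this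

lemma gram_fischer {ι : Type*} [Fintype ι] {β : Type*} [DecidableEq β] (J : Finset β) :
    ∀ {κ : Type} [Fintype κ] [DecidableEq κ] (M : Matrix ι κ ℝ) (g : κ → β), (∀ t, g t ∈ J) →
    (Mᴴ * M).det ≤ ∏ j ∈ J, ((M.submatrix id (Subtype.val : {t // g t = j} → κ))ᴴ *
        M.submatrix id (Subtype.val : {t // g t = j} → κ)).det := by
  classical
  induction J using Finset.induction_on with
  | empty =>
    intro κ _ _ M g hg
    haveI : IsEmpty κ := ⟨fun t => Finset.notMem_empty _ (hg t)⟩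
    simp [Matrix.det_isEmpty]
  | @insert a s ha ih =>
    intro κ _ _ M g hg
    set e : {t // g t = a} ⊕ {t // ¬ g t = a} ≃ κ := Equiv.sumCompl (fun t => g t = a) with he
    have h0 : (Mᴴ * M).det = ((M.submatrix id (id ∘ ⇑e))ᴴ * M.submatrix id (id ∘ ⇑e)).det := by
      rw [det_gram_comp_equiv M id e, Matrix.submatrix_id_id]
    set M' := M.submatrix id (id ∘ ⇑e) with hM'
    have h2 := gram_fischer_two M'
    have hinl : M'.submatrix id Sum.inl
        = M.submatrix id (Subtype.val : {t // g t = a} → κ) := by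
      ext i x
      simp [hM', he]
    have hinr : M'.submatrix id Sum.inr
        = M.submatrix id (Subtype.val : {t // ¬ g t = a} → κ) := by
      ext i x
      simp [hM', he]
    rw [hinl, hinr] at h2
    set M₂ := M.submatrix id (Subtype.val : {t // ¬ g t = a} → κ) with hM₂
    have hg₂ : ∀ t : {t // ¬ g t = a}, g t.val ∈ s := by
      intro t
      rcases Finset.mem_insert.mp (hg t.val) with h | h
      · exact absurd h t.2
      · exact h
    have hIH := ih M₂ (fun t => g t.val) hg₂
    have hprodeq : ∀ j ∈ s,
        ((M₂.submatrix id (Subtype.val : {t' : {t // ¬ g t = a} // g t'.val = j} → _))ᴴ *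
          M₂.submatrix id Subtype.val).det
        = ((M.submatrix id (Subtype.val : {t // g t = j} → κ))ᴴ *
          M.submatrix id Subtype.val).det := by
      intro j hj
      have hja : j ≠ a := fun h => ha (h ▸ hj)
      let ee : {t' : {t // ¬ g t = a} // g t'.val = j} ≃ {t // g t = j} :=
        { toFun := fun t' => ⟨t'.val.val, t'.2⟩
          invFun := fun t => ⟨⟨t.val, fun h => hja (t.2.symm.trans h)⟩, t.2⟩
          left_inv := fun t' => rfl
          right_inv := fun t => rfl }
      have hcomp : M₂.submatrix id (Subtype.val : {t' : {t // ¬ g t = a} // g t'.val = j} → _)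
          = M.submatrix id ((Subtype.val : {t // g t = j} → κ) ∘ ⇑ee) := rfl
      rw [hcomp, det_gram_comp_equiv M (Subtype.val : {t // g t = j} → κ) ee]
    calc (Mᴴ * M).det
        = (M'ᴴ * M').det := h0
      _ ≤ ((M.submatrix id (Subtype.val : {t // g t = a} → κ))ᴴ *
            M.submatrix id Subtype.val).det * (M₂ᴴ * M₂).det := h2
      _ ≤ ((M.submatrix id (Subtype.val : {t // g t = a} → κ))ᴴ *
            M.submatrix id Subtype.val).det *
          ∏ j ∈ s, ((M.submatrix id (Subtype.val : {t // g t = j} → κ))ᴴ *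
            M.submatrix id Subtype.val).det := by
          apply mul_le_mul_of_nonneg_left _
            (psd_det_nonneg (Matrix.posSemidef_conjTranspose_mul_self _))
          calc (M₂ᴴ * M₂).det ≤ _ := hIH
            _ = _ := Finset.prod_congr rfl hprodeq
      _ = ∏ j ∈ insert a s, ((M.submatrix id (Subtype.val : {t // g t = j} → κ))ᴴ *
            M.submatrix id Subtype.val).det := by rw [Finset.prod_insert ha]

lemma det_gram_le {k m : ℕ} (V : Matrix (Fin k) (Fin m) ℝ) {Cb : ℝ}
    (hb : ∀ f : Fin m → Fin k, Function.Injective f → |(V.submatrix f id).det| ≤ Cb) :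
    (Vᴴ * V).det ≤ (Nat.choose k m : ℝ) * Cb ^ 2 := by
  classical
  set T : (Fin m → Fin k) → ℝ :=
    fun φ => (∏ a, V (φ a) a) * (V.submatrix φ id).det with hT
  have e1 : (Vᴴ * V).det = ∑ φ : Fin m → Fin k, T φ := by
    have hrow : (Vᴴ * V : Matrix (Fin m) (Fin m) ℝ)
        = fun a => ∑ i ∈ (univ : Finset (Fin k)), V i a • (V i) := by
      ext a b
      simp [Matrix.mul_apply, Matrix.conjTranspose_apply, Finset.sum_apply]
    show (Matrix.detRowAlternating (R := ℝ) (n := Fin m)).toMultilinearMap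
      (Vᴴ * V : Matrix (Fin m) (Fin m) ℝ) = _
    rw [hrow]
    rw [(Matrix.detRowAlternating (R := ℝ) (n := Fin m)).toMultilinearMap.map_sum_finset
      (fun a i => V i a • (V i)) (fun _ => (univ : Finset (Fin k)))]
    rw [Fintype.piFinset_univ]
    refine Finset.sum_congr rfl fun φ _ => ?_
    rw [MultilinearMap.map_smul_univ]
    rfl
  have e2 : ∑ φ : Fin m → Fin k, T φ
      = ∑ φ ∈ univ.filter (fun φ : Fin m → Fin k => Function.Injective φ), T φ := by
    symm
    apply Finset.sum_subset (Finset.filter_subset _ _)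
    intro φ _ hφ
    have hni : ¬ Function.Injective φ := by simpa using hφ
    obtain ⟨a, b, heq, hne⟩ := Function.not_injective_iff.mp hni
    have hdet : (V.submatrix φ id).det = 0 :=
      Matrix.det_zero_of_row_eq hne (by ext c; simp [heq])
    simp [hT, hdet]
  have e3 : ∑ φ ∈ univ.filter (fun φ : Fin m → Fin k => Function.Injective φ), T φ
      = ∑ s ∈ Finset.powersetCard m (univ : Finset (Fin k)),
          ∑ φ ∈ (univ.filter (fun φ : Fin m → Fin k => Function.Injective φ)).filter
            (fun φ => univ.image φ = s), T φ := by
    symm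
    apply Finset.sum_fiberwise_of_maps_to
    intro φ hφ
    have hinj : Function.Injective φ := by simpa using hφ
    rw [Finset.mem_powersetCard]
    exact ⟨Finset.subset_univ _, by
      rw [Finset.card_image_of_injective _ hinj, Finset.card_univ, Fintype.card_fin]⟩
  rw [e1, e2, e3]
  have hbound : ∀ s ∈ Finset.powersetCard m (univ : Finset (Fin k)),
      ∑ φ ∈ (univ.filter (fun φ : Fin m → Fin k => Function.Injective φ)).filter
        (fun φ => univ.image φ = s), T φ ≤ Cb ^ 2 := by
    intro s hs
    have hcard : s.card = m := (Finset.mem_powersetCard.mp hs).2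
    set es : Fin m → Fin k := fun i => ((s.orderIsoOfFin hcard) i : Fin k) with hes
    have hesinj : Function.Injective es :=
      fun a b h => (s.orderIsoOfFin hcard).injective (Subtype.ext h)
    have himes : univ.image es = s := by
      apply Finset.eq_of_subset_of_card_le
      · intro x hx
        obtain ⟨a, _, rfl⟩ := Finset.mem_image.mp hx
        exact ((s.orderIsoOfFin hcard) a).2
      · rw [Finset.card_image_of_injective _ hesinj, Finset.card_univ, Fintype.card_fin, hcard]
    set W := V.submatrix es id with hW
    have esum : ∑ φ ∈ (univ.filter (fun φ : Fin m → Fin k => Function.Injective φ)).filter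
        (fun φ => univ.image φ = s), T φ = ∑ σ : Equiv.Perm (Fin m), T (es ∘ σ) := by
      symm
      apply Finset.sum_bij (fun (σ : Equiv.Perm (Fin m)) _ => es ∘ σ)
      · intro σ _
        simp only [Finset.mem_filter, Finset.mem_univ, true_and]
        constructor
        · exact hesinj.comp σ.injective
        · rw [show Finset.image (es ∘ σ) univ = (univ.image σ).image es from
            (Finset.image_image).symm, Finset.image_univ_equiv, himes]
      · intro σ _ σ' _ h
        exact Equiv.ext fun a => hesinj (congrFun h a)
      · intro φ hφ
        simp only [Finset.mem_filter, Finset.mem_univ, true_and] at hφ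
        obtain ⟨hinj, him⟩ := hφ
        have hmem : ∀ a, φ a ∈ s := fun a => him ▸ Finset.mem_image_of_mem φ (Finset.mem_univ a)
        set g : Fin m → Fin m := fun a => (s.orderIsoOfFin hcard).symm ⟨φ a, hmem a⟩ with hg
        have hginj : Function.Injective g := by
          intro a b h
          apply hinj
          have := congrArg (fun x => ((s.orderIsoOfFin hcard) x : Fin k)) h
          simpa [hg] using this
        refine ⟨Equiv.ofBijective g (Finite.injective_iff_bijective.mp hginj), Finset.mem_univ _, ?_⟩
        funext a
        show es (g a) = φ a
        exact congrArg Subtype.val ((s.orderIsoOfFin hcard).apply_symm_apply ⟨φ a, hmem a⟩)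
      · intro σ _
        rfl
    rw [esum]
    have ecal : ∑ σ : Equiv.Perm (Fin m), T (es ∘ σ) = W.det * W.det := by
      have : ∀ σ : Equiv.Perm (Fin m), T (es ∘ σ)
          = (Equiv.Perm.sign σ : ℝ) * (∏ a, W (σ a) a) * W.det := by
        intro σ
        have h1 : V.submatrix (es ∘ σ) id = W.submatrix σ id := rfl
        have h2 : (W.submatrix (⇑σ) id).det = (Equiv.Perm.sign σ : ℝ) * W.det :=
          Matrix.det_permute σ W
        have h3 : (∏ a, V ((es ∘ σ) a) a) = ∏ a, W (σ a) a := rfl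
        simp only [hT]
        rw [h3, h1, h2]
        ring
      rw [Finset.sum_congr rfl fun σ _ => this σ, ← Finset.sum_mul]
      rw [show ∑ σ : Equiv.Perm (Fin m), (Equiv.Perm.sign σ : ℝ) * (∏ a, W (σ a) a)
        = W.det from (Matrix.det_apply' W).symm]
    rw [ecal]
    have := hb es hesinj
    calc W.det * W.det = |W.det| ^ 2 := by rw [sq_abs]; ring
      _ ≤ Cb ^ 2 := by
        apply pow_le_pow_left₀ (abs_nonneg _) this
  calc ∑ s ∈ Finset.powersetCard m (univ : Finset (Fin k)), _ ≤
      (Finset.powersetCard m (univ : Finset (Fin k))).card • (Cb ^ 2) :=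
        Finset.sum_le_card_nsmul _ _ _ hbound
    _ = (Nat.choose k m : ℝ) * Cb ^ 2 := by
        rw [Finset.card_powersetCard, Finset.card_univ, Fintype.card_fin, nsmul_eq_mul]

lemma detlb_set_finite {m n : Type*} [Fintype m] [Fintype n] (A : Matrix m n ℝ) : { t | ∃ k : ℕ, 0 < k ∧ ∃ r : Fin k → m, ∃ c : Fin k → n,
    Function.Injective r ∧ Function.Injective c ∧
    t = |(A.submatrix r c).det| ^ ((k : ℝ)⁻¹) }.Finite := by
  classical
  apply Set.Finite.subset (Set.Finite.biUnion (Set.finite_Iic (Fintype.card m))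
    (fun k _ => Set.finite_range (fun rc : (Fin k → m) × (Fin k → n) =>
      |(A.submatrix rc.1 rc.2).det| ^ ((k : ℝ)⁻¹))))
  rintro t ⟨k, hk, r, c, hr, hc, rfl⟩
  have hkm : k ≤ Fintype.card m := by
    simpa using Fintype.card_le_of_injective r hr
  exact Set.mem_biUnion hkm ⟨(r, c), rfl⟩

lemma detlb_nonneg {m n : Type*} [Fintype m] [Fintype n] (A : Matrix m n ℝ) : 0 ≤ detlb A :=
  Real.sSup_nonneg fun x hx => by
    obtain ⟨k, hk, r, c, hr, hc, rfl⟩ := hx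
    exact Real.rpow_nonneg (abs_nonneg _) _

lemma abs_det_submatrix_le {m n : Type*} [Fintype m] [Fintype n] (A : Matrix m n ℝ) {ι : Type*} [Fintype ι] [DecidableEq ι]
    (r : ι → m) (c : ι → n) (hc : Function.Injective c) :
    |(A.submatrix r c).det| ≤ detlb A ^ (Fintype.card ι) := by
  classical
  rcases isEmpty_or_nonempty ι with hι | hι
  · simp [Matrix.det_isEmpty]
  by_cases hr : Function.Injective r
  · set k := Fintype.card ι with hk
    have hk0 : 0 < k := Fintype.card_pos
    set e : Fin k ≃ ι := (Fintype.equivFin ι).symm with he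
    have hdet : (A.submatrix (r ∘ e) (c ∘ e)).det = (A.submatrix r c).det := by
      rw [show A.submatrix (r ∘ ⇑e) (c ∘ ⇑e) = (A.submatrix r c).submatrix ⇑e ⇑e from rfl,
        Matrix.det_submatrix_equiv_self]
    have hmem : |(A.submatrix (r ∘ e) (c ∘ e)).det| ^ ((k : ℝ)⁻¹) ∈
        { t | ∃ k : ℕ, 0 < k ∧ ∃ r' : Fin k → m, ∃ c' : Fin k → n,
          Function.Injective r' ∧ Function.Injective c' ∧
          t = |(A.submatrix r' c').det| ^ ((k : ℝ)⁻¹) } :=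
      ⟨k, hk0, r ∘ e, c ∘ e, hr.comp e.injective, hc.comp e.injective, rfl⟩
    have hle : |(A.submatrix (r ∘ e) (c ∘ e)).det| ^ ((k : ℝ)⁻¹) ≤ detlb A :=
      le_csSup (detlb_set_finite A).bddAbove hmem
    calc |(A.submatrix r c).det|
        = (|(A.submatrix (r ∘ e) (c ∘ e)).det| ^ ((k : ℝ)⁻¹)) ^ k := by
          rw [Real.rpow_inv_natCast_pow (abs_nonneg _) hk0.ne', hdet]
      _ ≤ detlb A ^ k := pow_le_pow_left₀ (Real.rpow_nonneg (abs_nonneg _) _) hle k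
  · obtain ⟨a, b, heq, hne⟩ := Function.not_injective_iff.mp hr
    have hdet : (A.submatrix r c).det = 0 :=
      Matrix.det_zero_of_row_eq hne (by ext j; simp [heq])
    rw [hdet, abs_zero]
    exact pow_nonneg (detlb_nonneg A) _

lemma factorial_sum_le {α : Type*} [DecidableEq α] (J : Finset α) (f : α → ℕ) :
    Nat.factorial (∑ j ∈ J, f j) ≤ J.card ^ (∑ j ∈ J, f j) * ∏ j ∈ J, Nat.factorial (f j) := by
  induction J using Finset.induction_on with
  | empty => simp
  | @insert a s ha ih =>
    rw [Finset.sum_insert ha, Finset.prod_insert ha, Finset.card_insert_of_notMem ha]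
    set mm := f a
    set S := ∑ j ∈ s, f j
    set c := s.card
    have h1 : Nat.factorial (mm + S) = (mm + S).choose mm * Nat.factorial mm * Nat.factorial S := by
      rw [← Nat.choose_mul_factorial_mul_factorial (Nat.le_add_right mm S),
        Nat.add_sub_cancel_left]
    have hkey : (mm + S).choose mm * c ^ S ≤ (c + 1) ^ (mm + S) := by
      have hsymm : (mm + S).choose mm = (mm + S).choose S := by
        rw [← Nat.choose_symm (Nat.le_add_right mm S), Nat.add_sub_cancel_left]
      have hbin : (c + 1) ^ (mm + S) = ∑ i ∈ Finset.range (mm + S + 1),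
          c ^ i * 1 ^ (mm + S - i) * (mm + S).choose i := add_pow c 1 (mm + S)
      rw [hsymm, hbin]
      calc (mm + S).choose S * c ^ S = c ^ S * 1 ^ (mm + S - S) * (mm + S).choose S := by
            rw [one_pow, mul_one]; ring
        _ ≤ _ := Finset.single_le_sum (f := fun i => c ^ i * 1 ^ (mm + S - i) * (mm + S).choose i)
            (fun i _ => Nat.zero_le _)
            (Finset.mem_range.mpr (by omega))
    calc Nat.factorial (mm + S) = (mm + S).choose mm * Nat.factorial mm * Nat.factorial S := h1
      _ ≤ (mm + S).choose mm * Nat.factorial mm * (c ^ S * ∏ j ∈ s, Nat.factorial (f j)) :=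
          Nat.mul_le_mul_left _ ih
      _ = ((mm + S).choose mm * c ^ S) * (Nat.factorial mm * ∏ j ∈ s, Nat.factorial (f j)) := by ring
      _ ≤ (c + 1) ^ (mm + S) * (Nat.factorial mm * ∏ j ∈ s, Nat.factorial (f j)) :=
          Nat.mul_le_mul_right _ hkey

lemma pow_self_le_exp_mul_factorial (k : ℕ) : (k : ℝ) ^ k ≤ Real.exp 1 ^ k * (Nat.factorial k) := by
  have h := Real.sum_le_exp_of_nonneg (x := (k : ℝ)) (Nat.cast_nonneg k) (k + 1)
  have hterm : (k : ℝ) ^ k / (Nat.factorial k : ℝ) ≤ Real.exp k := by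
    refine le_trans ?_ h
    exact Finset.single_le_sum (f := fun i => (k : ℝ) ^ i / (Nat.factorial i : ℝ))
      (fun i _ => by positivity) (Finset.mem_range.mpr (by omega))
  have hfac : (0 : ℝ) < (Nat.factorial k : ℝ) := by positivity
  rw [div_le_iff₀ hfac] at hterm
  calc (k : ℝ) ^ k ≤ Real.exp k * (Nat.factorial k : ℝ) := hterm
    _ = Real.exp 1 ^ k * (Nat.factorial k : ℝ) := by rw [Real.exp_one_pow]

/-- For every positive integer `N` and every real matrix `A`,
`detlb (P_N ⊗ A) ≤ √(e·N) · detlb A`. -/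
theorem stmt3 (N : ℕ) (hN : 0 < N) {p q : ℕ} (A : Matrix (Fin p) (Fin q) ℝ) :
    detlb (powerMatrix N ⊗ₖ A) ≤ Real.sqrt (Real.exp 1 * N) * detlb A := by
  classical
  have hdlb := detlb_nonneg A
  set X := Real.sqrt (Real.exp 1 * N) * detlb A with hX
  have hXnn : 0 ≤ X := mul_nonneg (Real.sqrt_nonneg _) hdlb
  apply Real.sSup_le _ hXnn
  rintro t ⟨k, hk, R, C, hR, hC, rfl⟩
  set B := ((powerMatrix N ⊗ₖ A).submatrix R C) with hB
  suffices h : |B.det| ≤ X ^ k by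
    calc |B.det| ^ ((k : ℝ)⁻¹) ≤ (X ^ k) ^ ((k : ℝ)⁻¹) :=
        Real.rpow_le_rpow (abs_nonneg _) h (by positivity)
      _ = X := Real.pow_rpow_inv_natCast hXnn hk.ne'
  set g : Fin k → Fin N := fun t => (C t).1 with hg
  set J : Finset (Fin N) := Finset.univ.image g with hJ
  have hFischer := gram_fischer J B g (fun t => Finset.mem_image_of_mem g (Finset.mem_univ t))
  -- per-group bound
  have hgroup : ∀ j ∈ J,
      ((B.submatrix id (Subtype.val : {t // g t = j} → Fin k))ᴴ *
        B.submatrix id (Subtype.val : {t // g t = j} → Fin k)).det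
      ≤ (Nat.choose k (Fintype.card {t // g t = j}) : ℝ) *
          (detlb A ^ (Fintype.card {t // g t = j})) ^ 2 := by
    intro j _
    set e : Fin (Fintype.card {t // g t = j}) ≃ {t // g t = j} :=
      (Fintype.equivFin {t // g t = j}).symm with he
    rw [← det_gram_comp_equiv B (Subtype.val : {t // g t = j} → Fin k) e]
    apply det_gram_le
    intro f hf
    have hform : (B.submatrix id ((Subtype.val : {t // g t = j} → Fin k) ∘ ⇑e)).submatrix f id
        = Matrix.of (fun s t' => (powerMatrix N (R (f s)).1 j) *
            (A.submatrix (fun s' => (R (f s')).2) (fun t'' => (C ((e t'').val)).2)) s t') := by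
      ext s t'
      have hj1 : (C ((e t').val)).1 = j := (e t').2
      simp only [Matrix.submatrix_apply, Function.comp_apply, id_eq, Matrix.of_apply, hB,
        Matrix.kroneckerMap_apply, hj1]
    rw [hform, Matrix.det_mul_column, abs_mul]
    have h1 : |∏ s, powerMatrix N (R (f s)).1 j| ≤ 1 := by
      rw [Finset.abs_prod]
      apply Finset.prod_le_one (fun _ _ => abs_nonneg _)
      intro s _
      simp only [powerMatrix, Matrix.of_apply]
      split <;> norm_num
    have hcinj : Function.Injective (fun t'' => (C ((e t'').val)).2) := by
      intro t₁ t₂ h12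
      have h1' : (C ((e t₁).val)).1 = (C ((e t₂).val)).1 :=
        ((e t₁).2).trans ((e t₂).2).symm
      have : C ((e t₁).val) = C ((e t₂).val) := Prod.ext h1' h12
      exact e.injective (Subtype.val_injective (hC this))
    have h2 : |(A.submatrix (fun s' => (R (f s')).2) (fun t'' => (C ((e t'').val)).2)).det|
        ≤ detlb A ^ (Fintype.card {t // g t = j}) := by
      have := abs_det_submatrix_le A (fun s' => (R (f s')).2) (fun t'' => (C ((e t'').val)).2) hcinj
      rwa [Fintype.card_fin] at this
    calc |∏ s, powerMatrix N (R (f s)).1 j| *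
          |(A.submatrix (fun s' => (R (f s')).2) (fun t'' => (C ((e t'').val)).2)).det|
        ≤ 1 * (detlb A ^ (Fintype.card {t // g t = j})) :=
          mul_le_mul h1 h2 (abs_nonneg _) zero_le_one
      _ = detlb A ^ (Fintype.card {t // g t = j}) := one_mul _
  -- fiber cards sum to k
  have hsum : ∑ j ∈ J, Fintype.card {t // g t = j} = k := by
    have h1 := Finset.card_eq_sum_card_fiberwise
      (f := g) (s := (Finset.univ : Finset (Fin k))) (t := J)
      (fun t _ => Finset.mem_image_of_mem g (Finset.mem_univ t))
    rw [Finset.card_univ, Fintype.card_fin] at h1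
    calc ∑ j ∈ J, Fintype.card {t // g t = j}
        = ∑ j ∈ J, (Finset.univ.filter (fun t => g t = j)).card :=
          Finset.sum_congr rfl fun j _ => Fintype.card_subtype _
      _ = k := h1.symm
  -- numeric bound on product of binomials
  have hprodle : (∏ j ∈ J, (Nat.choose k (Fintype.card {t // g t = j}) : ℝ))
      ≤ (Real.exp 1 * N) ^ k := by
    set Pc : ℕ := ∏ j ∈ J, Nat.choose k (Fintype.card {t // g t = j}) with hPc
    set Pf : ℕ := ∏ j ∈ J, Nat.factorial (Fintype.card {t // g t = j}) with hPf
    have hnat1 : Pc * Pf ≤ k ^ k := by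
      rw [hPc, hPf, ← Finset.prod_mul_distrib]
      calc ∏ j ∈ J, Nat.choose k (Fintype.card {t // g t = j}) *
              Nat.factorial (Fintype.card {t // g t = j})
          = ∏ j ∈ J, Nat.descFactorial k (Fintype.card {t // g t = j}) :=
            Finset.prod_congr rfl fun j _ => by
              rw [Nat.descFactorial_eq_factorial_mul_choose]; ring
        _ ≤ ∏ j ∈ J, k ^ (Fintype.card {t // g t = j}) :=
            Finset.prod_le_prod' fun j _ => Nat.descFactorial_le_pow _ _
        _ = k ^ (∑ j ∈ J, Fintype.card {t // g t = j}) := Finset.prod_pow_eq_pow_sum _ _ _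
        _ = k ^ k := by rw [hsum]
    have hnat2 : Nat.factorial k ≤ N ^ k * Pf := by
      have h2 := factorial_sum_le J (fun j => Fintype.card {t // g t = j})
      rw [hsum] at h2
      refine h2.trans (Nat.mul_le_mul_right _ (Nat.pow_le_pow_left ?_ _))
      calc J.card ≤ (Finset.univ : Finset (Fin N)).card := Finset.card_le_univ J
        _ = N := by rw [Finset.card_univ, Fintype.card_fin]
    have hPfpos : (0 : ℝ) < (Pf : ℝ) := by
      have : 0 < Pf := Finset.prod_pos fun j _ => Nat.factorial_pos _
      exact_mod_cast this
    rw [show (∏ j ∈ J, (Nat.choose k (Fintype.card {t // g t = j}) : ℝ)) = (Pc : ℝ) by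
      rw [hPc]; push_cast; ring]
    rw [← mul_le_mul_iff_of_pos_right hPfpos]
    calc (Pc : ℝ) * (Pf : ℝ) ≤ (k : ℝ) ^ k := by exact_mod_cast hnat1
      _ ≤ Real.exp 1 ^ k * (Nat.factorial k) := pow_self_le_exp_mul_factorial k
      _ ≤ Real.exp 1 ^ k * ((N : ℝ) ^ k * (Pf : ℝ)) := by
          apply mul_le_mul_of_nonneg_left _ (by positivity)
          exact_mod_cast hnat2
      _ = (Real.exp 1 * N) ^ k * (Pf : ℝ) := by rw [mul_pow]; ring
  -- combine
  have hdet2 : B.det ^ 2 ≤ (Real.exp 1 * N) ^ k * (detlb A ^ k) ^ 2 := by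
    have h0 : B.det ^ 2 = (Bᴴ * B).det := by
      rw [Matrix.det_mul, Matrix.det_conjTranspose]
      simp [sq]
    rw [h0]
    calc (Bᴴ * B).det ≤ ∏ j ∈ J, ((B.submatrix id (Subtype.val : {t // g t = j} → Fin k))ᴴ *
            B.submatrix id (Subtype.val : {t // g t = j} → Fin k)).det := hFischer
      _ ≤ ∏ j ∈ J, (Nat.choose k (Fintype.card {t // g t = j}) : ℝ) *
            (detlb A ^ (Fintype.card {t // g t = j})) ^ 2 :=
          Finset.prod_le_prod
            (fun j _ => psd_det_nonneg (Matrix.posSemidef_conjTranspose_mul_self _))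
            hgroup
      _ = (∏ j ∈ J, (Nat.choose k (Fintype.card {t // g t = j}) : ℝ)) *
            (∏ j ∈ J, detlb A ^ (Fintype.card {t // g t = j})) ^ 2 := by
          rw [Finset.prod_mul_distrib, ← Finset.prod_pow]
      _ = (∏ j ∈ J, (Nat.choose k (Fintype.card {t // g t = j}) : ℝ)) * (detlb A ^ k) ^ 2 := by
          rw [Finset.prod_pow_eq_pow_sum, hsum]
      _ ≤ (Real.exp 1 * N) ^ k * (detlb A ^ k) ^ 2 :=
          mul_le_mul_of_nonneg_right hprodle (by positivity)
  have hXk : (X ^ k) ^ 2 = (Real.exp 1 * N) ^ k * (detlb A ^ k) ^ 2 := by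
    have h1 : Real.sqrt (Real.exp 1 * N) ^ 2 = Real.exp 1 * N := Real.sq_sqrt (by positivity)
    calc (X ^ k) ^ 2 = (Real.sqrt (Real.exp 1 * N) ^ 2) ^ k * (detlb A ^ k) ^ 2 := by
          rw [hX]; ring
      _ = (Real.exp 1 * N) ^ k * (detlb A ^ k) ^ 2 := by rw [h1]
  have habs : |B.det| ^ 2 ≤ (X ^ k) ^ 2 := by
    rw [sq_abs, hXk]; exact hdet2
  nlinarith [abs_nonneg B.det, pow_nonneg hXnn k, habs]
end

section
/- For every positive integer N and every real p×q matrix A, disc(P_N ⊗ A) ≥ N · disc₁(A) / 2, where ⊗ denotes the Kronecker product. -/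
open scoped Kronecker

/-- The discrepancy of a real matrix: the minimum over ±1 colorings `x` of `‖A x‖_∞`
(the sup norm on `m → ℝ`). -/
noncomputable def disc {m n : Type*} [Fintype m] [Fintype n] (A : Matrix m n ℝ) : ℝ :=
  sInf { t | ∃ x : n → ℝ, (∀ j, x j = 1 ∨ x j = -1) ∧ t = ‖A.mulVec x‖ }

/-- The (normalized) L¹ discrepancy of a real matrix. -/
noncomputable def disc1 {m n : Type*} [Fintype m] [Fintype n] (A : Matrix m n ℝ) : ℝ :=
  sInf { t | ∃ x : n → ℝ, (∀ j, x j = 1 ∨ x j = -1) ∧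
    t = (∑ i, |A.mulVec x i|) / (Fintype.card m : ℝ) }

lemma exists_row (N : ℕ) (f : Fin N → Bool) :
    ∃ i : Fin (2 ^ N), ∀ j : Fin N, Nat.testBit (i : ℕ) (j : ℕ) = f j := by
  refine ⟨finFunctionFinEquiv (fun j => if f j then 1 else 0), fun j => ?_⟩
  have h : ((finFunctionFinEquiv.symm (finFunctionFinEquiv
      (fun j => if f j then (1 : Fin 2) else 0))) j : ℕ)
      = ((finFunctionFinEquiv (fun j => if f j then (1 : Fin 2) else 0)) : ℕ)
        / 2 ^ (j : ℕ) % 2 := rfl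
  rw [Equiv.symm_apply_apply] at h
  rw [Nat.testBit_eq_decide_div_mod_eq, ← h]
  cases hf : f j <;> simp [hf]

/-- Discrepancy amplification: for every positive integer `N` and every real `p × q`
matrix `A`, `disc (P_N ⊗ A) ≥ N · disc₁ A / 2`. -/
theorem stmt4 (N : ℕ) (hN : 0 < N) {p q : ℕ} (A : Matrix (Fin p) (Fin q) ℝ) :
    (N : ℝ) * disc1 A / 2 ≤ disc (powerMatrix N ⊗ₖ A) := by
  have hbdd : BddBelow { t | ∃ x : Fin q → ℝ, (∀ j, x j = 1 ∨ x j = -1) ∧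
      t = (∑ i, |A.mulVec x i|) / (Fintype.card (Fin p) : ℝ) } := by
    refine ⟨0, fun t ht => ?_⟩
    obtain ⟨x, _, rfl⟩ := ht
    positivity
  apply le_csInf
  · exact ⟨‖(powerMatrix N ⊗ₖ A).mulVec 1‖, 1, fun _ => Or.inl rfl, rfl⟩
  rintro t ⟨x, hx, rfl⟩
  set E := ‖(powerMatrix N ⊗ₖ A).mulVec x‖ with hE
  have hEnn : 0 ≤ E := norm_nonneg _
  rcases Nat.eq_zero_or_pos p with hp | hp
  · subst hp
    have h1 : disc1 A ≤ 0 :=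
      csInf_le hbdd ⟨1, fun _ => Or.inl rfl, by simp⟩
    have hN' : (0:ℝ) < N := by exact_mod_cast hN
    nlinarith [hN']
  have hp' : (0 : ℝ) < p := by exact_mod_cast hp
  set v : Fin N → Fin p → ℝ := fun j r => A.mulVec (fun c => x (j, c)) r with hv
  have hb : ∀ z : Fin (2 ^ N) × Fin p, |(powerMatrix N ⊗ₖ A).mulVec x z| ≤ E := by
    intro z
    have := norm_le_pi_norm ((powerMatrix N ⊗ₖ A).mulVec x) z
    rwa [Real.norm_eq_abs] at this
  have hval : ∀ i : Fin (2 ^ N), ∀ r : Fin p, (powerMatrix N ⊗ₖ A).mulVec x (i, r)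
      = ∑ j : Fin N, (if Nat.testBit (i : ℕ) (j : ℕ) then v j r else 0) := by
    intro i r
    rw [Matrix.mulVec, dotProduct, Fintype.sum_prod_type]
    refine Finset.sum_congr rfl fun j _ => ?_
    simp only [Matrix.kroneckerMap_apply, powerMatrix, Matrix.of_apply]
    split
    · simp [v, Matrix.mulVec, dotProduct]
    · simp
  have key : ∀ r : Fin p, ∑ j : Fin N, |v j r| ≤ 2 * E := by
    intro r
    obtain ⟨i₁, hi₁⟩ := exists_row N (fun j => decide (0 ≤ v j r))
    obtain ⟨i₂, hi₂⟩ := exists_row N (fun j => !decide (0 ≤ v j r))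
    have h1 : (powerMatrix N ⊗ₖ A).mulVec x (i₁, r)
        = ∑ j : Fin N, (if 0 ≤ v j r then v j r else 0) := by
      rw [hval i₁ r]
      refine Finset.sum_congr rfl fun j _ => ?_
      simp [hi₁ j]
    have h2 : (powerMatrix N ⊗ₖ A).mulVec x (i₂, r)
        = ∑ j : Fin N, (if 0 ≤ v j r then 0 else v j r) := by
      rw [hval i₂ r]
      refine Finset.sum_congr rfl fun j _ => ?_
      simp only [hi₂ j]
      by_cases h : 0 ≤ v j r <;> simp [h]
    calc ∑ j : Fin N, |v j r|
        = (∑ j : Fin N, (if 0 ≤ v j r then v j r else 0))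
          - (∑ j : Fin N, (if 0 ≤ v j r then 0 else v j r)) := by
          rw [← Finset.sum_sub_distrib]
          refine Finset.sum_congr rfl fun j _ => ?_
          by_cases h : 0 ≤ v j r
          · simp [h, abs_of_nonneg h]
          · push_neg at h
            simp [not_le.mpr h, abs_of_neg h]
      _ ≤ |∑ j : Fin N, (if 0 ≤ v j r then v j r else 0)|
          + |∑ j : Fin N, (if 0 ≤ v j r then 0 else v j r)| := by
          have := sub_le_sub (le_abs_self (∑ j : Fin N, (if 0 ≤ v j r then v j r else 0)))
            (neg_abs_le (∑ j : Fin N, (if 0 ≤ v j r then 0 else v j r)))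
          linarith
      _ ≤ E + E := add_le_add (by rw [← h1]; exact hb _) (by rw [← h2]; exact hb _)
      _ = 2 * E := by ring
  have sum1 : ∀ j : Fin N, disc1 A * p ≤ ∑ r : Fin p, |v j r| := by
    intro j
    have hmem : (∑ r : Fin p, |v j r|) / (p : ℝ) ∈ { t | ∃ y : Fin q → ℝ,
        (∀ c, y c = 1 ∨ y c = -1) ∧ t = (∑ i, |A.mulVec y i|) / (Fintype.card (Fin p) : ℝ) } :=
      ⟨fun c => x (j, c), fun c => hx (j, c), by rw [Fintype.card_fin]⟩
    have hle : disc1 A ≤ (∑ r : Fin p, |v j r|) / p := csInf_le hbdd hmem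
    calc disc1 A * p ≤ (∑ r : Fin p, |v j r|) / p * p := by
          exact mul_le_mul_of_nonneg_right hle hp'.le
      _ = ∑ r : Fin p, |v j r| := div_mul_cancel₀ _ hp'.ne'
  have total : (N : ℝ) * (disc1 A * p) ≤ (p : ℝ) * (2 * E) := by
    calc (N : ℝ) * (disc1 A * p) = ∑ _j : Fin N, disc1 A * p := by
          rw [Finset.sum_const, Finset.card_univ, Fintype.card_fin, nsmul_eq_mul]
      _ ≤ ∑ j : Fin N, ∑ r : Fin p, |v j r| := Finset.sum_le_sum fun j _ => sum1 j
      _ = ∑ r : Fin p, ∑ j : Fin N, |v j r| := Finset.sum_comm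
      _ ≤ ∑ _r : Fin p, 2 * E := Finset.sum_le_sum fun r _ => key r
      _ = (p : ℝ) * (2 * E) := by
          rw [Finset.sum_const, Finset.card_univ, Fintype.card_fin, nsmul_eq_mul]
  nlinarith [total, hp']
end

section
/- For every integer k ≥ 0, detlb(A_k) ≤ 2, where A_k is the 2^k × 2^k discrete Haar basis matrix. More precisely, every i×i square submatrix B of A_k satisfies |det(B)| ≤ 2^i. -/
open scoped Kronecker

open Matrix Function

lemma abs_det_single_col {m : ℕ} (B : Matrix (Fin (m+1)) (Fin (m+1)) ℝ) (x0 j0 : Fin (m+1))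
    (h0 : ∀ x, x ≠ x0 → B x j0 = 0) :
    |B.det| = |B x0 j0| * |(B.submatrix x0.succAbove j0.succAbove).det| := by
  rw [Matrix.det_succ_column B j0, Finset.sum_eq_single x0
    (fun x _ hx => by rw [h0 x hx]; ring) (fun h => absurd (Finset.mem_univ x0) h)]
  rw [abs_mul, abs_mul, abs_pow, abs_neg, abs_one, one_pow, one_mul]

lemma abs_det_single_row {m : ℕ} (B : Matrix (Fin (m+1)) (Fin (m+1)) ℝ) (x0 j0 : Fin (m+1))
    (h0 : ∀ j, j ≠ j0 → B x0 j = 0) :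
    |B.det| = |B x0 j0| * |(B.submatrix x0.succAbove j0.succAbove).det| := by
  rw [Matrix.det_succ_row B x0, Finset.sum_eq_single j0
    (fun j _ hj => by rw [h0 j hj]; ring) (fun h => absurd (Finset.mem_univ j0) h)]
  rw [abs_mul, abs_mul, abs_pow, abs_neg, abs_one, one_pow, one_mul]

lemma key {n : ℕ} (A : Matrix (Fin n) (Fin n) ℝ)
    (hA : ∀ (i : ℕ) (r c : Fin i → Fin n), Injective r → Injective c →
      |(A.submatrix r c).det| ≤ 2 ^ i) :
    ∀ (i : ℕ) (r c : Fin i → Fin n ⊕ Fin n), Injective r → Injective c →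
      |((Matrix.fromBlocks A 1 A (-1)).submatrix r c).det| ≤ 2 ^ i := by
  intro i
  induction i with
  | zero => intro r c _ _; simp [Matrix.det_fin_zero]
  | succ i ih =>
    intro r c hr hc
    set M := Matrix.fromBlocks A (1 : Matrix (Fin n) (Fin n) ℝ) A (-1 : Matrix (Fin n) (Fin n) ℝ)
      with hM
    set B := M.submatrix r c with hB
    by_cases hright : ∃ j0 p, c j0 = Sum.inr p
    · obtain ⟨j0, p, hj0⟩ := hright
      -- entries of column j0
      have hcol : ∀ x, r x ≠ Sum.inl p → r x ≠ Sum.inr p → B x j0 = 0 := by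
        intro x h1 h2
        rcases hq : r x with q | q
        · have hqp : q ≠ p := fun h => h1 (by rw [hq, h])
          simp [hB, hM, hq, hj0, Matrix.one_apply, hqp]
        · have hqp : q ≠ p := fun h => h2 (by rw [hq, h])
          simp [hB, hM, hq, hj0, Matrix.one_apply, hqp]
      by_cases hL : ∃ x, r x = Sum.inl p
      · obtain ⟨x, hx⟩ := hL
        by_cases hR : ∃ y, r y = Sum.inr p
        · -- both rows present: row operation then expand, factor 2
          obtain ⟨y, hy⟩ := hR
          have hxy : x ≠ y := fun h => by rw [h, hy] at hx; simp at hx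
          set B' := B.updateRow x (B x + (-1 : ℝ) • B y) with hB'
          have hdet : B'.det = B.det := Matrix.det_updateRow_add_smul_self B hxy (-1)
          have hrow : ∀ j, j ≠ j0 → B' x j = 0 := by
            intro j hj
            rcases hq : c j with q | q
            · simp [hB', hB, hM, hx, hy, hq, Matrix.updateRow_self]
            · have hqp : q ≠ p := fun h => hj (hc (by rw [hq, hj0, h]))
              simp [hB', hB, hM, hx, hy, hq, hj0, Matrix.updateRow_self, Matrix.one_apply,
                hqp, Ne.symm hqp]
          have hval : B' x j0 = 2 := by
            simp [hB', hB, hM, hx, hy, hj0, Matrix.updateRow_self, Matrix.one_apply]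
            norm_num
          have hminor : B'.submatrix x.succAbove j0.succAbove
              = M.submatrix (r ∘ x.succAbove) (c ∘ j0.succAbove) := by
            ext z w
            simp [hB', hB, Matrix.updateRow_ne (Fin.succAbove_ne x z)]
          have := abs_det_single_row B' x j0 hrow
          rw [hdet, hval, hminor] at this
          rw [this]
          have hb := ih (r ∘ x.succAbove) (c ∘ j0.succAbove)
            (hr.comp Fin.succAbove_right_injective) (hc.comp Fin.succAbove_right_injective)
          rw [pow_succ, mul_comm ((2:ℝ)^i) 2]
          have : |(2:ℝ)| = 2 := by norm_num
          rw [this]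
          exact mul_le_mul_of_nonneg_left hb (by norm_num)
        · -- only top row present: expand along column j0, factor 1
          have h0 : ∀ z, z ≠ x → B z j0 = 0 := by
            intro z hz
            refine hcol z (fun h => hz (hr (h.trans hx.symm))) (fun h => hR ⟨z, h⟩)
          have hval : |B x j0| = 1 := by
            simp [hB, hM, hx, hj0, Matrix.one_apply]
          have := abs_det_single_col B x j0 h0
          rw [hval, one_mul] at this
          rw [this, Matrix.submatrix_submatrix]
          calc |(M.submatrix (r ∘ x.succAbove) (c ∘ j0.succAbove)).det| ≤ 2 ^ i :=
                ih _ _ (hr.comp Fin.succAbove_right_injective)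
                  (hc.comp Fin.succAbove_right_injective)
            _ ≤ 2 ^ (i+1) := by
                have : (2:ℝ)^i ≤ 2^(i+1) := pow_le_pow_right₀ (by norm_num) (by omega)
                exact this
      · by_cases hR : ∃ y, r y = Sum.inr p
        · -- only bottom row present
          obtain ⟨y, hy⟩ := hR
          have h0 : ∀ z, z ≠ y → B z j0 = 0 := by
            intro z hz
            refine hcol z (fun h => hL ⟨z, h⟩) (fun h => hz (hr (h.trans hy.symm)))
          have hval : |B y j0| = 1 := by
            simp [hB, hM, hy, hj0, Matrix.one_apply]
          have := abs_det_single_col B y j0 h0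
          rw [hval, one_mul] at this
          rw [this, Matrix.submatrix_submatrix]
          calc |(M.submatrix (r ∘ y.succAbove) (c ∘ j0.succAbove)).det| ≤ 2 ^ i :=
                ih _ _ (hr.comp Fin.succAbove_right_injective)
                  (hc.comp Fin.succAbove_right_injective)
            _ ≤ 2 ^ (i+1) := pow_le_pow_right₀ (by norm_num) (by omega)
        · -- column j0 is zero
          have : B.det = 0 := Matrix.det_eq_zero_of_column_eq_zero j0
            (fun z => hcol z (fun h => hL ⟨z, h⟩) (fun h => hR ⟨z, h⟩))
          rw [this]
          simp
    · -- all columns are left columns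
      push_neg at hright
      have hc' : ∀ j, ∃ q, c j = Sum.inl q := by
        intro j
        rcases h : c j with q | q
        · exact ⟨q, rfl⟩
        · exact absurd h (hright j q)
      choose c' hc'eq using hc'
      have hc'inj : Injective c' := by
        intro a b h
        exact hc (by rw [hc'eq, hc'eq, h])
      set r' : Fin (i+1) → Fin n := fun x => Sum.elim id id (r x) with hr'
      have hBeq : B = A.submatrix r' c' := by
        ext z w
        rcases hq : r z with q | q <;>
          simp [hB, hM, hq, hc'eq, hr', Matrix.submatrix_apply]
      by_cases hr'inj : Injective r'
      · rw [hBeq]; exact hA _ _ _ hr'inj hc'inj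
      · rw [Injective] at hr'inj
        push_neg at hr'inj
        obtain ⟨a, b, hab, hne⟩ := hr'inj
        have : B.det = 0 := by
          apply Matrix.det_zero_of_row_eq hne
          rw [hBeq]
          funext w
          simp [Matrix.submatrix_apply, hab]
        rw [this]
        simp

lemma detlb_le_two {N : Type*} [Fintype N] (A : Matrix N N ℝ)
    (h : ∀ (i : ℕ) (r c : Fin i → N), Injective r → Injective c →
      |(A.submatrix r c).det| ≤ 2 ^ i) :
    detlb A ≤ 2 := by
  apply Real.sSup_le _ (by norm_num)
  rintro t ⟨i, hi, r, c, hr, hc, rfl⟩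
  calc |(A.submatrix r c).det| ^ ((i:ℝ)⁻¹) ≤ ((2:ℝ)^i) ^ ((i:ℝ)⁻¹) :=
        Real.rpow_le_rpow (abs_nonneg _) (h i r c hr hc) (by positivity)
    _ = 2 := Real.pow_rpow_inv_natCast (by norm_num) hi.ne'

/-- For every `k ≥ 0`, `detlb (A_k) ≤ 2`; more precisely, every `i × i` square submatrix
`B` of the Haar matrix `A_k` satisfies `|det B| ≤ 2 ^ i`. -/
theorem stmt7 (k : ℕ) :
    detlb (haar k) ≤ 2 ∧
    ∀ (i : ℕ) (r c : Fin i → Fin (2 ^ k)), Function.Injective r → Function.Injective c →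
      |((haar k).submatrix r c).det| ≤ 2 ^ i := by
  induction k with
  | zero =>
    have h2 : ∀ (i : ℕ) (r c : Fin i → Fin (2 ^ 0)), Injective r → Injective c →
        |((haar 0).submatrix r c).det| ≤ 2 ^ i := by
      intro i
      match i with
      | 0 => intro r c _ _; simp [Matrix.det_fin_zero]
      | 1 =>
        intro r c _ _
        rw [Matrix.det_fin_one]
        simp [haar]
      | (i+2) =>
        intro r c hr _
        exfalso
        have h01 : r 0 = r 1 := by
          have h0 := (r 0).isLt
          have h1 := (r 1).isLt
          simp only [pow_zero] at h0 h1
          exact Fin.ext (by omega)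
        have := hr h01
        simp [Fin.ext_iff] at this
    exact ⟨detlb_le_two _ h2, h2⟩
  | succ k ih =>
    have h2 : ∀ (i : ℕ) (r c : Fin i → Fin (2 ^ (k+1))), Injective r → Injective c →
        |((haar (k+1)).submatrix r c).det| ≤ 2 ^ i := by
      intro i r c hr hc
      rw [haar, Matrix.reindex_apply, Matrix.submatrix_submatrix]
      exact key (haar k) ih.2 i _ _ ((Equiv.injective _).comp hr)
        ((Equiv.injective _).comp hc)
    exact ⟨detlb_le_two _ h2, h2⟩
end

section
/- For every integer k ≥ 0, the matrices A_k^+ and A_k^- are totally unimodular: every square submatrix of A_k^+ has determinant in {-1,0,1}, and likewise for A_k^-. -/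
open scoped Kronecker

/-- Indicator matrix of the positive entries of the Haar matrix. -/
noncomputable def haarPos (k : ℕ) : Matrix (Fin (2 ^ k)) (Fin (2 ^ k)) ℝ :=
  Matrix.of fun i j => if 0 < haar k i j then 1 else 0

/-- Indicator matrix of the negative entries of the Haar matrix. -/
noncomputable def haarNeg (k : ℕ) : Matrix (Fin (2 ^ k)) (Fin (2 ^ k)) ℝ :=
  Matrix.of fun i j => if haar k i j < 0 then 1 else 0


lemma empty_tu {n : Type*} (A : Matrix Empty n ℝ) : A.IsTotallyUnimodular := by
  intro k f g hf hg
  cases k with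
  | zero => exact ⟨1, by simp [Matrix.det_fin_zero]⟩
  | succ k => exact (f 0).elim

lemma one_tu {n : Type*} [DecidableEq n] : (1 : Matrix n n ℝ).IsTotallyUnimodular := by
  have h : (Matrix.fromRows (0 : Matrix Empty n ℝ) (1 : Matrix n n ℝ)).IsTotallyUnimodular :=
    (Matrix.fromRows_one_isTotallyUnimodular_iff _).mpr (empty_tu _)
  have h2 := h.submatrix Sum.inr id
  exact h2

lemma zero_tu {m n : Type*} : (0 : Matrix m n ℝ).IsTotallyUnimodular := by
  intro k f g hf hg
  cases k with
  | zero => exact ⟨1, by simp [Matrix.det_fin_zero]⟩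
  | succ k =>
    refine ⟨0, ?_⟩
    have h0 : (0 : Matrix m n ℝ).submatrix f g = 0 := rfl
    rw [h0, Matrix.det_zero]
    simp

lemma dup_tu {m n : Type*} {B : Matrix m n ℝ} (hB : B.IsTotallyUnimodular) :
    (Matrix.fromCols B B).IsTotallyUnimodular := by
  have : Matrix.fromCols B B = B.submatrix id (Sum.elim id id) := by
    ext i j; cases j <;> simp [Matrix.fromCols]
  rw [this]
  exact hB.submatrix _ _

lemma block_pos_tu {m n : Type*} [DecidableEq m] [DecidableEq n] {B : Matrix m n ℝ}
    (hB : B.IsTotallyUnimodular) :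
    (Matrix.fromBlocks B (1 : Matrix m m ℝ) B (0 : Matrix m m ℝ)).IsTotallyUnimodular := by
  rw [← Matrix.transpose_isTotallyUnimodular_iff, Matrix.fromBlocks_transpose,
    Matrix.transpose_one, ← Matrix.fromRows_fromCols_eq_fromBlocks]
  refine (dup_tu hB.transpose).fromRows_unitlike (fun _ i => ⟨Sum.inl i, 1, ?_⟩)
  ext j
  cases j <;> simp [Matrix.fromCols, Matrix.one_apply, Pi.single_apply, eq_comm]

lemma block_neg_tu {m n : Type*} [DecidableEq m] [DecidableEq n] {B : Matrix m n ℝ}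
    (hB : B.IsTotallyUnimodular) :
    (Matrix.fromBlocks B (0 : Matrix m m ℝ) B (1 : Matrix m m ℝ)).IsTotallyUnimodular := by
  rw [← Matrix.transpose_isTotallyUnimodular_iff, Matrix.fromBlocks_transpose,
    Matrix.transpose_one, ← Matrix.fromRows_fromCols_eq_fromBlocks]
  refine (dup_tu hB.transpose).fromRows_unitlike (fun _ i => ⟨Sum.inr i, 1, ?_⟩)
  ext j
  cases j <;> simp [Matrix.fromCols, Matrix.one_apply, Pi.single_apply, eq_comm]

open Matrix in
lemma sign_mem {x : ℝ} (h : x ∈ Set.range SignType.cast) : x ∈ ({-1, 0, 1} : Set ℝ) := by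
  obtain ⟨s, rfl⟩ := h
  cases s <;> simp

lemma haar_tu : ∀ k, (haarPos k).IsTotallyUnimodular ∧ (haarNeg k).IsTotallyUnimodular := by
  intro k
  induction k with
  | zero =>
    constructor
    · have h1 : haarPos 0 = 1 := by
        ext i j
        have hij : i = j := by
          have hi := i.isLt; have hj := j.isLt
          simp only [pow_zero] at hi hj
          exact Fin.ext (by omega)
        simp [haarPos, haar, Matrix.one_apply, hij]
      rw [h1]; exact one_tu
    · have h0 : haarNeg 0 = 0 := by
        ext i j
        norm_num [haarNeg, haar]
      rw [h0]; exact zero_tu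
  | succ k ih =>
    set e : Fin (2 ^ k) ⊕ Fin (2 ^ k) ≃ Fin (2 ^ (k + 1)) :=
      ((finSumFinEquiv (m := 2 ^ k) (n := 2 ^ k)).trans
        (finCongr (by rw [pow_succ, mul_two]))) with he
    constructor
    · have hp : haarPos (k + 1) = Matrix.reindex e e
          (Matrix.of fun p q => if 0 < Matrix.fromBlocks (haar k)
            (1 : Matrix (Fin (2 ^ k)) (Fin (2 ^ k)) ℝ) (haar k)
            (-1 : Matrix (Fin (2 ^ k)) (Fin (2 ^ k)) ℝ) p q then (1 : ℝ) else 0) := rfl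
      have hblk : (Matrix.of fun p q => if 0 < Matrix.fromBlocks (haar k)
            (1 : Matrix (Fin (2 ^ k)) (Fin (2 ^ k)) ℝ) (haar k)
            (-1 : Matrix (Fin (2 ^ k)) (Fin (2 ^ k)) ℝ) p q then (1 : ℝ) else 0)
          = Matrix.fromBlocks (haarPos k) (1 : Matrix (Fin (2 ^ k)) (Fin (2 ^ k)) ℝ)
            (haarPos k) (0 : Matrix (Fin (2 ^ k)) (Fin (2 ^ k)) ℝ) := by
        ext p q
        cases p with
        | inl a =>
          cases q with
          | inl b => simp [haarPos]; congr
          | inr b => by_cases hab : a = b <;> simp [Matrix.one_apply, hab]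
        | inr a =>
          cases q with
          | inl b => simp [haarPos]; congr
          | inr b =>
            by_cases hab : a = b <;> simp [Matrix.one_apply, Matrix.neg_apply, hab]
      rw [hp, hblk]
      exact (block_pos_tu ih.1).reindex e e
    · have hn : haarNeg (k + 1) = Matrix.reindex e e
          (Matrix.of fun p q => if Matrix.fromBlocks (haar k)
            (1 : Matrix (Fin (2 ^ k)) (Fin (2 ^ k)) ℝ) (haar k)
            (-1 : Matrix (Fin (2 ^ k)) (Fin (2 ^ k)) ℝ) p q < 0 then (1 : ℝ) else 0) := rfl
      have hblk : (Matrix.of fun p q => if Matrix.fromBlocks (haar k)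
            (1 : Matrix (Fin (2 ^ k)) (Fin (2 ^ k)) ℝ) (haar k)
            (-1 : Matrix (Fin (2 ^ k)) (Fin (2 ^ k)) ℝ) p q < 0 then (1 : ℝ) else 0)
          = Matrix.fromBlocks (haarNeg k) (0 : Matrix (Fin (2 ^ k)) (Fin (2 ^ k)) ℝ)
            (haarNeg k) (1 : Matrix (Fin (2 ^ k)) (Fin (2 ^ k)) ℝ) := by
        ext p q
        cases p with
        | inl a =>
          cases q with
          | inl b => simp [haarNeg]; congr
          | inr b => by_cases hab : a = b <;> simp [Matrix.one_apply, hab]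
        | inr a =>
          cases q with
          | inl b => simp [haarNeg]; congr
          | inr b =>
            by_cases hab : a = b <;> simp [Matrix.one_apply, Matrix.neg_apply, hab]
      rw [hn, hblk]
      exact (block_neg_tu ih.2).reindex e e

/-- For every `k ≥ 0`, the matrices `A_k^+` and `A_k^-` are totally unimodular: every
square submatrix has determinant in `{-1, 0, 1}`. -/
theorem stmt8 (k : ℕ) :
    (∀ (i : ℕ) (r c : Fin i → Fin (2 ^ k)), Function.Injective r → Function.Injective c →
      ((haarPos k).submatrix r c).det ∈ ({-1, 0, 1} : Set ℝ)) ∧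
    (∀ (i : ℕ) (r c : Fin i → Fin (2 ^ k)), Function.Injective r → Function.Injective c →
      ((haarNeg k).submatrix r c).det ∈ ({-1, 0, 1} : Set ℝ)) := by
  obtain ⟨h1, h2⟩ := haar_tu k
  exact ⟨fun i r c hr hc => sign_mem (h1 i r c hr hc),
    fun i r c hr hc => sign_mem (h2 i r c hr hc)⟩
end

section
/- For every integer k ≥ 1, disc₁(A_k) = ((k+1)/2^k) · binomial(k, ⌊(k+1)/2⌋), where A_k is the 2^k × 2^k discrete Haar basis matrix. Consequently disc₁(A_k) is of order √k. -/
open scoped Kronecker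

lemma pascal_sum (k : ℕ) (g : ℝ → ℝ) :
    ∑ j ∈ Finset.range (k+2), ((k+1).choose j : ℝ) * g ((k:ℝ) + 2 - 2*j)
      = ∑ j ∈ Finset.range (k+1), (k.choose j : ℝ) *
          (g ((k:ℝ) + 1 - 2*j + 1) + g ((k:ℝ) + 1 - 2*j - 1)) := by
  have hL : ∑ j ∈ Finset.range (k+2), ((k+1).choose j : ℝ) * g ((k:ℝ) + 2 - 2*j)
      = (∑ j ∈ Finset.range (k+1), ((k.choose j : ℝ) * g ((k:ℝ) - 2*j)
          + (k.choose (j+1) : ℝ) * g ((k:ℝ) - 2*j))) + g ((k:ℝ) + 2) := by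
    rw [Finset.sum_range_succ' _ (k+1)]
    simp only [Nat.choose_succ_succ, Nat.cast_add, Nat.choose_zero_right, Nat.cast_one, one_mul,
      Nat.cast_ofNat, add_mul]
    congr 1
    · apply Finset.sum_congr rfl
      intro j _
      have : (k:ℝ) + 2 - 2*((j:ℝ) + 1) = (k:ℝ) - 2*j := by ring
      rw [this, Nat.succ_eq_add_one]
    · norm_num
  have hR : ∑ j ∈ Finset.range (k+1), (k.choose j : ℝ) *
          (g ((k:ℝ) + 1 - 2*j + 1) + g ((k:ℝ) + 1 - 2*j - 1))
      = (∑ j ∈ Finset.range (k+1), (k.choose j : ℝ) * g ((k:ℝ) + 2 - 2*j))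
        + ∑ j ∈ Finset.range (k+1), (k.choose j : ℝ) * g ((k:ℝ) - 2*j) := by
    rw [← Finset.sum_add_distrib]
    apply Finset.sum_congr rfl
    intro j _
    have h1 : (k:ℝ) + 1 - 2*j + 1 = (k:ℝ) + 2 - 2*j := by ring
    have h2 : (k:ℝ) + 1 - 2*j - 1 = (k:ℝ) - 2*j := by ring
    rw [h1, h2, mul_add]
  have hfirst : ∑ j ∈ Finset.range (k+1), (k.choose j : ℝ) * g ((k:ℝ) + 2 - 2*j)
      = g ((k:ℝ) + 2) + ∑ j ∈ Finset.range k, (k.choose (j+1) : ℝ) * g ((k:ℝ) - 2*j) := by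
    rw [Finset.sum_range_succ' _ k, add_comm]
    congr 1
    · norm_num
    · apply Finset.sum_congr rfl
      intro j _
      have : (k:ℝ) + 2 - 2*((j:ℕ)+1:ℕ) = (k:ℝ) - 2*j := by push_cast; ring
      rw [this]
  have hsecond : ∑ j ∈ Finset.range (k+1), (k.choose (j+1) : ℝ) * g ((k:ℝ) - 2*j)
      = ∑ j ∈ Finset.range k, (k.choose (j+1) : ℝ) * g ((k:ℝ) - 2*j) := by
    rw [Finset.sum_range_succ]
    simp [Nat.choose_succ_self]
  rw [hL, hR, hfirst, Finset.sum_add_distrib, hsecond]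
  ring

lemma haar_sum (k : ℕ) (g : ℝ → ℝ) (hg : ∀ t, g (-t) = g t)
    (x : Fin (2^k) → ℝ) (hx : ∀ j, x j = 1 ∨ x j = -1) :
    ∑ i, g ((haar k).mulVec x i)
      = ∑ j ∈ Finset.range (k+1), (k.choose j : ℝ) * g ((k:ℝ) + 1 - 2*j) := by
  induction k generalizing g with
  | zero =>
    rw [Finset.sum_range_one]
    have h1 : ∑ i, g ((haar 0).mulVec x i) = g ((haar 0).mulVec x 0) :=
      Fin.sum_univ_one (fun i => g ((haar 0).mulVec x i))
    have h2 : (haar 0).mulVec x 0 = x 0 := by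
      have h2' : ∑ j, (haar 0) 0 j * x j = (haar 0) 0 0 * x 0 :=
        Fin.sum_univ_one (fun j => (haar 0) 0 j * x j)
      show ∑ j, (haar 0) 0 j * x j = x 0
      rw [h2']
      simp [haar]
    rw [h1, h2]
    rcases hx 0 with h | h <;> rw [h]
    · norm_num
    · rw [show (-1:ℝ) = -(1:ℝ) from rfl, hg 1]; norm_num
  | succ k ih =>
    set e := ((finSumFinEquiv (m := 2 ^ k) (n := 2 ^ k)).trans
      (finCongr (show 2^k + 2^k = 2^(k+1) by rw [pow_succ, mul_two])))
    have hmv : (haar (k+1)).mulVec x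
        = ((Matrix.fromBlocks (haar k) (1 : Matrix (Fin (2 ^ k)) (Fin (2 ^ k)) ℝ)
          (haar k) (-1)).mulVec (x ∘ e)) ∘ e.symm := by
      show ((Matrix.reindex e e _).mulVec x) = _
      rw [Matrix.reindex_apply, Matrix.submatrix_mulVec_equiv _ _ _ e.symm]
      simp
    rw [hmv]
    rw [show (∑ i, g ((((Matrix.fromBlocks (haar k) 1 (haar k) (-1)).mulVec (x ∘ e)) ∘ e.symm) i))
        = ∑ i : Fin (2^k) ⊕ Fin (2^k), g ((Matrix.fromBlocks (haar k) 1 (haar k) (-1)).mulVec (x ∘ e) i) from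
      (Equiv.sum_comp e (fun i => g ((Matrix.fromBlocks (haar k) 1 (haar k) (-1)).mulVec (x ∘ e) (e.symm i)))).symm.trans
        (Finset.sum_congr rfl (fun i _ => by rw [Equiv.symm_apply_apply]))]
    have hy : (x ∘ e) = Sum.elim (x ∘ e ∘ Sum.inl) (x ∘ e ∘ Sum.inr) := by
      funext i; cases i <;> rfl
    rw [hy, Matrix.fromBlocks_mulVec, Fintype.sum_sum_type]
    simp only [Sum.elim_inl, Sum.elim_inr, Matrix.one_mulVec, Matrix.neg_mulVec, Pi.add_apply,
      Pi.neg_apply, Sum.elim_comp_inl, Sum.elim_comp_inr]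
    set y₁ : Fin (2^k) → ℝ := x ∘ e ∘ Sum.inl
    set y₂ : Fin (2^k) → ℝ := x ∘ e ∘ Sum.inr
    set u : Fin (2^k) → ℝ := (haar k).mulVec y₁ with hu
    have key : ∀ i, g (u i + y₂ i) + g (u i + -(y₂ i)) = g (u i + 1) + g (u i - 1) := by
      intro i
      rcases hx (e (Sum.inr i)) with h | h <;>
        simp only [y₂, Function.comp_apply, h]
      · ring_nf
      · rw [add_comm (g _)]; ring_nf
    rw [← Finset.sum_add_distrib]
    rw [Finset.sum_congr rfl (fun i _ => key i)]
    have hgev : ∀ t : ℝ, (fun t => g (t+1) + g (t-1)) (-t) = (fun t => g (t+1) + g (t-1)) t := by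
      intro t
      simp only
      rw [show -t + 1 = -(t-1) by ring, show -t - 1 = -(t+1) by ring, hg, hg, add_comm]
    have hx1 : ∀ j, y₁ j = 1 ∨ y₁ j = -1 := fun j => hx (e (Sum.inl j))
    have ihy := ih (fun t => g (t+1) + g (t-1)) hgev y₁ hx1
    rw [ihy, ← pascal_sum k g]
    apply Finset.sum_congr rfl
    intro j _
    have : (k:ℝ) + 2 - 2*j = ((k+1:ℕ):ℝ) + 1 - 2*j := by push_cast; ring
    rw [this]

lemma disc_eq (k : ℕ) : disc1 (haar k)
    = (∑ j ∈ Finset.range (k+1), (k.choose j : ℝ) * |(k:ℝ)+1-2*j|) / 2^k := by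
  have hset : { t | ∃ x : Fin (2^k) → ℝ, (∀ j, x j = 1 ∨ x j = -1) ∧
      t = (∑ i, |(haar k).mulVec x i|) / (Fintype.card (Fin (2^k)) : ℝ) }
      = {(∑ j ∈ Finset.range (k+1), (k.choose j : ℝ) * |(k:ℝ)+1-2*j|) / 2^k} := by
    ext t
    simp only [Set.mem_setOf_eq, Set.mem_singleton_iff]
    constructor
    · rintro ⟨x, hx, rfl⟩
      rw [haar_sum k (fun t => |t|) abs_neg x hx, Fintype.card_fin]
      norm_num
    · rintro rfl
      refine ⟨fun _ => 1, fun _ => Or.inl rfl, ?_⟩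
      rw [haar_sum k (fun t => |t|) abs_neg _ (fun _ => Or.inl rfl), Fintype.card_fin]
      norm_num
  unfold disc1
  rw [hset, csInf_singleton]

lemma sum_abs_id (k : ℕ) : ∑ j ∈ Finset.range (k+1), (k.choose j : ℝ) * |(k:ℝ)+1-2*j|
    = ((k:ℝ)+1) * (k.choose ((k+1)/2) : ℝ) := by
  induction k with
  | zero => norm_num
  | succ k ih =>
    have hcast : ∀ j ∈ Finset.range (k+2), ((k+1).choose j : ℝ) * |((k+1:ℕ):ℝ)+1-2*j|
        = ((k+1).choose j : ℝ) * |(k:ℝ)+2-2*j| := by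
      intro j _
      have : ((k+1:ℕ):ℝ)+1-2*j = (k:ℝ)+2-2*j := by push_cast; ring
      rw [this]
    rw [Finset.sum_congr rfl hcast, pascal_sum k (fun t => |t|)]
    have key : ∀ j ∈ Finset.range (k+1),
        (k.choose j : ℝ) * (|(k:ℝ)+1-2*j+1| + |(k:ℝ)+1-2*j-1|)
        = 2 * ((k.choose j : ℝ) * |(k:ℝ)+1-2*j|)
          + (if 2*j = k+1 then 2*(k.choose j : ℝ) else 0) := by
      intro j _
      rcases lt_trichotomy (2*j) (k+1) with h | h | h
      · have hd : (1:ℝ) ≤ (k:ℝ)+1-2*j := by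
          have : (2*j:ℕ) ≤ k := by omega
          have := (Nat.cast_le (α := ℝ)).2 this
          push_cast at this
          linarith
        rw [if_neg (by omega), abs_of_nonneg (by linarith), abs_of_nonneg (by linarith),
          abs_of_nonneg (by linarith)]
        ring
      · have hd : (k:ℝ)+1-2*j = 0 := by
          have : ((2*j:ℕ):ℝ) = ((k+1:ℕ):ℝ) := by rw [h]
          push_cast at this
          linarith
        rw [if_pos h, hd]
        norm_num
        ring
      · have hd : (k:ℝ)+1-2*j ≤ -1 := by
          have : (k+2:ℕ) ≤ 2*j := by omega
          have := (Nat.cast_le (α := ℝ)).2 this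
          push_cast at this
          linarith
        rw [if_neg (by omega), abs_of_nonpos (by linarith), abs_of_nonpos (by linarith),
          abs_of_nonpos (by linarith)]
        ring
    rw [Finset.sum_congr rfl key, Finset.sum_add_distrib, ← Finset.mul_sum, ih]
    rcases Nat.even_or_odd k with ⟨t, rfl⟩ | ⟨t, rfl⟩
    · have hzero : ∑ j ∈ Finset.range (t+t+1), (if 2*j = t+t+1 then 2*((t+t).choose j : ℝ) else 0) = 0 :=
        Finset.sum_eq_zero (fun j _ => if_neg (by omega))
      rw [hzero]
      have h1 : (t+t+1)/2 = t := by omega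
      have h2 : (t+t+1+1)/2 = t+1 := by omega
      rw [h1, h2]
      have hnat : (t+t+1) * ((t+t).choose t) = ((t+t+1).choose (t+1)) * (t+1) :=
        Nat.add_one_mul_choose_eq (t+t) t
      have hcast := congrArg (fun n : ℕ => (n:ℝ)) hnat
      push_cast at hcast ⊢
      nlinarith [hcast]
    · have hone : ∑ j ∈ Finset.range (2*t+1+1), (if 2*j = 2*t+1+1 then 2*((2*t+1).choose j : ℝ) else 0)
          = 2*((2*t+1).choose (t+1) : ℝ) := by
        rw [Finset.sum_congr rfl (fun j _ => by
          rw [show (if 2*j = 2*t+1+1 then 2*((2*t+1).choose j : ℝ) else 0)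
            = (if j = t+1 then 2*((2*t+1).choose (t+1) : ℝ) else 0) from by
            rcases eq_or_ne j (t+1) with rfl | hj
            · rw [if_pos (by omega), if_pos rfl]
            · rw [if_neg (by omega), if_neg hj]])]
        rw [Finset.sum_ite_eq' (Finset.range (2*t+1+1)) (t+1)]
        rw [if_pos (Finset.mem_range.2 (by omega))]
      rw [hone]
      have h1 : (2*t+1+1)/2 = t+1 := by omega
      have h2 : (2*t+1+1+1)/2 = t+1 := by omega
      rw [h1, h2]
      have hnat : (2*t+1+1).choose (t+1) = 2 * ((2*t+1).choose (t+1)) := by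
        have hp : (2*t+1+1).choose (t+1) = (2*t+1).choose t + (2*t+1).choose (t+1) :=
          Nat.choose_succ_succ (2*t+1) t
        have hsym : (2*t+1).choose t = (2*t+1).choose (t+1) := by
          have := Nat.choose_symm (show t ≤ 2*t+1 by omega)
          rw [show 2*t+1-t = t+1 by omega] at this
          exact this.symm
        omega
      have hcast := congrArg (fun n : ℕ => (n:ℝ)) hnat
      push_cast at hcast ⊢
      nlinarith [hcast]

lemma F1 : ∀ t : ℕ, 1 ≤ t → 16^t ≤ 4 * t * (Nat.centralBinom t)^2 := by
  intro t ht
  induction t, ht using Nat.le_induction with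
  | base => decide
  | succ t ht ih =>
    set c := Nat.centralBinom t with hc
    have hrec : (t+1) * Nat.centralBinom (t+1) = 2*(2*t+1) * c :=
      Nat.succ_mul_centralBinom_succ t
    have h2 : (t+1) * 16^(t+1) ≤ (t+1) * (4*(t+1)*(Nat.centralBinom (t+1))^2) := by
      calc (t+1) * 16^(t+1) = 16^t * (16*(t+1)) := by ring
        _ ≤ (4*t*c^2) * (16*(t+1)) := mul_le_mul_left ih _
        _ = (4*t*(t+1)) * (16*c^2) := by ring
        _ ≤ ((2*t+1)^2) * (16*c^2) := mul_le_mul_left (by nlinarith) _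
        _ = 4*((2*(2*t+1)*c)^2) := by ring
        _ = 4*(((t+1)*Nat.centralBinom (t+1))^2) := by rw [hrec]
        _ = (t+1) * (4*(t+1)*(Nat.centralBinom (t+1))^2) := by ring
    exact Nat.le_of_mul_le_mul_left h2 (by omega)

lemma F2 : ∀ t : ℕ, (t+1) * (Nat.centralBinom t)^2 ≤ 16^t := by
  intro t
  induction t with
  | zero => decide
  | succ t ih =>
    set c := Nat.centralBinom t with hc
    have hrec : (t+1) * Nat.centralBinom (t+1) = 2*(2*t+1) * c :=
      Nat.succ_mul_centralBinom_succ t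
    have h2 : (t+1)^3 * ((t+1+1) * (Nat.centralBinom (t+1))^2) ≤ (t+1)^3 * 16^(t+1) := by
      calc (t+1)^3 * ((t+1+1) * (Nat.centralBinom (t+1))^2)
          = (t+1)*(t+2)*(((t+1)*Nat.centralBinom (t+1))^2) := by ring
        _ = (t+1)*(t+2)*((2*(2*t+1)*c)^2) := by rw [hrec]
        _ = ((t+2)*(2*t+1)^2) * (4*((t+1)*c^2)) := by ring
        _ ≤ ((t+2)*(2*t+1)^2) * (4*16^t) := mul_le_mul_right (mul_le_mul_right ih 4) _
        _ ≤ (4*(t+1)^3) * (4*16^t) := mul_le_mul_left (by nlinarith) _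
        _ = (t+1)^3 * 16^(t+1) := by ring
    exact Nat.le_of_mul_le_mul_left h2 (by positivity)

lemma Tbound (k : ℕ) (hk : 1 ≤ k) :
    k * 4^k ≤ 4 * ((k+1) * Nat.choose k ((k+1)/2))^2 ∧
    ((k+1) * Nat.choose k ((k+1)/2))^2 ≤ 4*k*4^k := by
  rcases Nat.even_or_odd k with ⟨t, rfl⟩ | ⟨t, rfl⟩
  · -- k = t + t
    have ht : 1 ≤ t := by omega
    have h1 : (t+t+1)/2 = t := by omega
    have hch : (t+t).choose t = Nat.centralBinom t := by
      rw [show t+t = 2*t by ring]; rfl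
    have h4 : (4:ℕ)^(t+t) = 16^t := by
      rw [show t+t = 2*t by ring, pow_mul]; norm_num
    rw [h1, hch, h4]
    set c := Nat.centralBinom t
    have hF1 := F1 t ht
    have hF2 := F2 t
    constructor
    · calc (t+t)*16^t ≤ (t+t)*(4*t*c^2) := mul_le_mul_right hF1 _
        _ = (8*t^2)*c^2 := by ring
        _ ≤ (4*(t+t+1)^2)*c^2 := mul_le_mul_left (by nlinarith) _
        _ = 4*((t+t+1)*c)^2 := by ring
    · have h2 : (t+1)*((t+t+1)*c)^2 ≤ (t+1)*(4*(t+t)*16^t) := by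
        calc (t+1)*((t+t+1)*c)^2 = (t+t+1)^2 * ((t+1)*c^2) := by ring
          _ ≤ (t+t+1)^2 * 16^t := mul_le_mul_right hF2 _
          _ ≤ (8*t*(t+1)) * 16^t := mul_le_mul_left (by nlinarith) _
          _ = (t+1)*(4*(t+t)*16^t) := by ring
      exact Nat.le_of_mul_le_mul_left h2 (by omega)
  · -- k = 2t+1
    have h1 : (2*t+1+1)/2 = t+1 := by omega
    have hch : (2*t+1) * Nat.centralBinom t = (2*t+1).choose (t+1) * (t+1) := by
      have h := Nat.add_one_mul_choose_eq (2*t) t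
      rwa [show (2*t).choose t = Nat.centralBinom t from rfl] at h
    have h4 : (4:ℕ)^(2*t+1) = 4*16^t := by
      rw [pow_succ, pow_mul]; ring_nf
    rw [h1, h4]
    set c := Nat.centralBinom t
    set ch := (2*t+1).choose (t+1)
    have hF2 := F2 t
    have key : 16^t ≤ 4*(2*t+1)*c^2 := by
      rcases Nat.eq_zero_or_pos t with rfl | ht
      · decide
      · calc 16^t ≤ 4*t*c^2 := F1 t ht
          _ ≤ 4*(2*t+1)*c^2 := mul_le_mul_left (by omega) _
    constructor
    · have h2 : ((2*t+1)*(4*16^t)) * (t+1)^2 ≤ (4*((2*t+1+1)*ch)^2) * (t+1)^2 := by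
        calc ((2*t+1)*(4*16^t)) * (t+1)^2 = ((2*t+1)*4*(t+1)^2) * 16^t := by ring
          _ ≤ ((2*t+1)*4*(t+1)^2) * (4*(2*t+1)*c^2) := mul_le_mul_right key _
          _ = 16*((2*t+1)*c)^2 * (t+1)^2 := by ring
          _ = 16*(ch*(t+1))^2 * (t+1)^2 := by rw [hch]
          _ = (4*((2*t+1+1)*ch)^2) * (t+1)^2 := by ring
      exact Nat.le_of_mul_le_mul_right h2 (by positivity)
    · have h2 : ((2*t+1+1)*ch)^2 * (t+1)^2 ≤ ((4*(2*t+1))*(4*16^t)) * (t+1)^2 := by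
        calc ((2*t+1+1)*ch)^2 * (t+1)^2 = 4*((ch*(t+1))^2) * (t+1)^2 := by ring
          _ = 4*(((2*t+1)*c)^2) * (t+1)^2 := by rw [hch]
          _ = (4*(2*t+1)^2*(t+1)) * ((t+1)*c^2) := by ring
          _ ≤ (4*(2*t+1)^2*(t+1)) * 16^t := mul_le_mul_right hF2 _
          _ ≤ ((4*(2*t+1))*(4*(t+1)^2)) * 16^t := mul_le_mul_left (by nlinarith) _
          _ = ((4*(2*t+1))*(4*16^t)) * (t+1)^2 := by ring
      exact Nat.le_of_mul_le_mul_right h2 (by positivity)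


/-- For every integer `k ≥ 1`, `disc₁ (A_k) = ((k+1)/2^k) · C(k, ⌊(k+1)/2⌋)`;
consequently `disc₁ (A_k)` is of order `√k`. -/
theorem stmt9 :
    (∀ k : ℕ, 1 ≤ k →
      disc1 (haar k) = ((k : ℝ) + 1) / 2 ^ k * (Nat.choose k ((k + 1) / 2) : ℝ)) ∧
    ∃ c₁ c₂ : ℝ, 0 < c₁ ∧ 0 < c₂ ∧ ∀ k : ℕ, 1 ≤ k →
      c₁ * Real.sqrt k ≤ disc1 (haar k) ∧ disc1 (haar k) ≤ c₂ * Real.sqrt k := by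
  have hform : ∀ k : ℕ, disc1 (haar k)
      = (((k+1) * Nat.choose k ((k+1)/2) : ℕ) : ℝ) / 2^k := by
    intro k
    rw [disc_eq, sum_abs_id]
    push_cast
    ring
  constructor
  · intro k hk
    rw [hform k]
    push_cast
    ring
  · refine ⟨1/2, 2, by norm_num, by norm_num, ?_⟩
    intro k hk
    obtain ⟨hlo, hhi⟩ := Tbound k hk
    set T : ℕ := (k+1) * Nat.choose k ((k+1)/2) with hT
    have h4k : (0:ℝ) < 4^k := by positivity
    have hd0 : 0 ≤ disc1 (haar k) := by rw [hform k]; positivity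
    have hsq : disc1 (haar k)^2 = (T:ℝ)^2 / 4^k := by
      rw [hform k, div_pow]
      congr 1
      rw [← pow_mul, mul_comm, pow_mul]
      norm_num
    have hk0 : (0:ℝ) ≤ k := Nat.cast_nonneg k
    have hlo' : (k:ℝ)/4 ≤ disc1 (haar k)^2 := by
      rw [hsq, div_le_div_iff₀ (by norm_num) h4k]
      have : (k:ℝ)*4^k ≤ 4*(T:ℝ)^2 := by exact_mod_cast hlo
      linarith
    have hhi' : disc1 (haar k)^2 ≤ 4*(k:ℝ) := by
      rw [hsq, div_le_iff₀ h4k]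
      have : (T:ℝ)^2 ≤ 4*(k:ℝ)*4^k := by exact_mod_cast hhi
      linarith
    constructor
    · have h1 : (1/2*Real.sqrt k)^2 ≤ disc1 (haar k)^2 := by
        rw [mul_pow, Real.sq_sqrt hk0]
        calc (1/2:ℝ)^2*k = k/4 := by ring
          _ ≤ _ := hlo'
      calc (1/2:ℝ)*Real.sqrt k = Real.sqrt ((1/2*Real.sqrt k)^2) :=
            (Real.sqrt_sq (by positivity)).symm
        _ ≤ Real.sqrt (disc1 (haar k)^2) := Real.sqrt_le_sqrt h1
        _ = disc1 (haar k) := Real.sqrt_sq hd0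
    · have h1 : disc1 (haar k)^2 ≤ (2*Real.sqrt k)^2 := by
        rw [mul_pow, Real.sq_sqrt hk0]
        calc disc1 (haar k)^2 ≤ 4*(k:ℝ) := hhi'
          _ = 2^2*k := by ring
      calc disc1 (haar k) = Real.sqrt (disc1 (haar k)^2) := (Real.sqrt_sq hd0).symm
        _ ≤ Real.sqrt ((2*Real.sqrt k)^2) := Real.sqrt_le_sqrt h1
        _ = 2*Real.sqrt k := Real.sqrt_sq (by positivity)
end

section
/- Let Ã_k be the 2^k × (2^k − 1) matrix obtained from the discrete Haar basis matrix A_k by deleting its first (all-ones) column. For every x ∈ {-1,+1}^{2^k − 1}, the vector Ã_k x is a permutation of the vector Ã_k 𝟙, where 𝟙 is the all-ones vector; that is, there is a bijection σ of the row indices such that (Ã_k x)_i = (Ã_k 𝟙)_{σ(i)} for all i. -/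
open scoped Kronecker

noncomputable def haarTilde (k : ℕ) :
    Matrix (Fin (2 ^ k)) {j : Fin (2 ^ k) // j ≠ 0} ℝ :=
  (haar k).submatrix id (fun j : {j : Fin (2 ^ k) // j ≠ 0} => (j : Fin (2 ^ k)))

/-- The zero-extension of a vector indexed by nonzero indices. -/
noncomputable def extVec (k : ℕ) (x : {j : Fin (2 ^ k) // j ≠ 0} → ℝ) : Fin (2 ^ k) → ℝ :=
  fun j => if h : j = 0 then 0 else x ⟨j, h⟩

/-- The zero-extension of the all-ones vector. -/
noncomputable def ones0 (k : ℕ) : Fin (2 ^ k) → ℝ := fun j => if j = 0 then 0 else 1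

lemma haarTilde_mulVec (k : ℕ) (x : {j : Fin (2 ^ k) // j ≠ 0} → ℝ) :
    (haarTilde k).mulVec x = (haar k).mulVec (extVec k x) := by
  funext i
  simp only [Matrix.mulVec, dotProduct, haarTilde, Matrix.submatrix_apply, id]
  calc ∑ j : {j : Fin (2 ^ k) // j ≠ 0}, haar k i ↑j * x j
      = ∑ j : {j : Fin (2 ^ k) // j ≠ 0}, haar k i ↑j * extVec k x ↑j :=
        Finset.sum_congr rfl fun j _ => by rw [extVec, dif_neg j.2]
    _ = ∑ j ∈ Finset.univ.erase (0 : Fin (2 ^ k)), haar k i j * extVec k x j :=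
        (Finset.sum_subtype (p := fun j : Fin (2 ^ k) => j ≠ 0)
          (Finset.univ.erase (0 : Fin (2 ^ k))) (fun a => by simp)
          (fun j => haar k i j * extVec k x j)).symm
    _ = ∑ j, haar k i j * extVec k x j := by
        rw [← Finset.add_sum_erase _ _ (Finset.mem_univ (0 : Fin (2 ^ k)))]
        simp [extVec]

lemma extVec_ones (k : ℕ) : extVec k (fun _ => 1) = ones0 k := by
  funext j
  simp only [extVec, ones0]
  split <;> simp_all

lemma main_lemma (k : ℕ) : ∀ v : Fin (2 ^ k) → ℝ, v 0 = 0 →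
    (∀ j, j ≠ 0 → v j = 1 ∨ v j = -1) →
    ∃ σ : Equiv.Perm (Fin (2 ^ k)),
      ∀ i, (haar k).mulVec v i = (haar k).mulVec (ones0 k) (σ i) := by
  induction k with
  | zero =>
    intro v hv0 _
    refine ⟨1, fun i => ?_⟩
    have hv : v = ones0 0 := by
      funext j
      have hj : j = 0 := by
        apply Fin.ext
        have := j.isLt
        simp only [pow_zero] at this
        omega
      simp [hj, hv0, ones0]
    have hi : (1 : Equiv.Perm (Fin (2 ^ 0))) i = i := rfl
    rw [hv, hi]
  | succ k ih =>
    intro v hv0 hv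
    classical
    set e : Fin (2 ^ k) ⊕ Fin (2 ^ k) ≃ Fin (2 ^ (k + 1)) :=
      (finSumFinEquiv (m := 2 ^ k) (n := 2 ^ k)).trans
        (finCongr (by rw [pow_succ, mul_two])) with he
    have he_inl : ∀ i : Fin (2 ^ k), ((e (Sum.inl i)) : ℕ) = (i : ℕ) := by
      intro i; simp [he]
    have he_inr : ∀ i : Fin (2 ^ k), ((e (Sum.inr i)) : ℕ) = 2 ^ k + (i : ℕ) := by
      intro i; simp [he, Nat.add_comm]
    set y : Fin (2 ^ k) → ℝ := fun i => v (e (Sum.inl i)) with hy_def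
    set z : Fin (2 ^ k) → ℝ := fun i => v (e (Sum.inr i)) with hz_def
    have hy0 : y 0 = 0 := by
      have : e (Sum.inl (0 : Fin (2 ^ k))) = 0 := by
        apply Fin.ext; simp [he_inl]
      simp [hy_def, this, hv0]
    have hy : ∀ j, j ≠ 0 → y j = 1 ∨ y j = -1 := by
      intro j hj
      apply hv
      intro h
      apply hj
      apply Fin.ext
      have := he_inl j
      rw [h] at this
      simpa using this.symm
    have hz : ∀ i, z i = 1 ∨ z i = -1 := by
      intro i
      apply hv
      intro h
      have := he_inr i
      rw [h] at this
      simp at this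
      omega
    obtain ⟨σ, hσ⟩ := ih y hy0 hy
    -- the flip involution
    let flip : Fin (2 ^ k) ⊕ Fin (2 ^ k) → Fin (2 ^ k) ⊕ Fin (2 ^ k) := fun s =>
      match s with
      | .inl i => if z i = 1 then .inl i else .inr i
      | .inr i => if z i = 1 then .inr i else .inl i
    have hflip : Function.Involutive flip := by
      intro s
      rcases s with i | i <;> by_cases h : z i = 1 <;> simp [flip, h]
    let π : Equiv.Perm (Fin (2 ^ k) ⊕ Fin (2 ^ k)) :=
      (hflip.toPerm _).trans (Equiv.sumCongr σ σ)
    have hmul : ∀ w : Fin (2 ^ (k + 1)) → ℝ,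
        (haar (k + 1)).mulVec w =
          fun i => (Matrix.fromBlocks (haar k) (1 : Matrix (Fin (2 ^ k)) (Fin (2 ^ k)) ℝ)
            (haar k) (-1 : Matrix (Fin (2 ^ k)) (Fin (2 ^ k)) ℝ)).mulVec (w ∘ e) (e.symm i) := by
      intro w
      show (Matrix.reindex e e _).mulVec w = _
      rw [Matrix.reindex_apply, Matrix.submatrix_mulVec_equiv]
      rfl
    have hve : v ∘ e = Sum.elim y z := by funext s; cases s <;> rfl
    have hone : ones0 (k + 1) ∘ e = Sum.elim (ones0 k) (fun _ => 1) := by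
      funext s
      rcases s with i | i
      · simp only [Function.comp_apply, Sum.elim_inl, ones0]
        by_cases h : i = 0
        · subst h
          have : e (Sum.inl (0 : Fin (2 ^ k))) = 0 := by apply Fin.ext; simp [he_inl]
          simp [this]
        · have h1 : e (Sum.inl i) ≠ 0 := by
            intro hc
            apply h
            apply Fin.ext
            have := he_inl i
            rw [hc] at this
            simpa using this.symm
          simp [h1, h]
      · simp only [Function.comp_apply, Sum.elim_inr, ones0]
        have h1 : e (Sum.inr i) ≠ 0 := by
          intro hc
          have := he_inr i
          rw [hc] at this
          simp at this
          omega
        simp [h1]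
    refine ⟨e.symm.trans (π.trans e), fun i => ?_⟩
    rw [hmul v, hmul (ones0 (k + 1))]
    simp only [hve, hone, Matrix.fromBlocks_mulVec]
    have hsimp : e.symm ((e.symm.trans (π.trans e)) i) = π (e.symm i) := by simp
    rw [hsimp]
    generalize e.symm i = s
    simp only [Sum.elim_comp_inl, Sum.elim_comp_inr, Matrix.neg_mulVec, Matrix.one_mulVec]
    rcases s with j | j <;> by_cases h : z j = 1
    · have hπ : π (Sum.inl j) = Sum.inl (σ j) := by
        simp [π, flip, Function.Involutive.toPerm, h]
      rw [hπ]; simp [hσ j, h]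
    · have hz' : z j = -1 := (hz j).resolve_left h
      have hπ : π (Sum.inl j) = Sum.inr (σ j) := by
        simp [π, flip, Function.Involutive.toPerm, h]
      rw [hπ]; simp [hσ j, hz']
    · have hπ : π (Sum.inr j) = Sum.inr (σ j) := by
        simp [π, flip, Function.Involutive.toPerm, h]
      rw [hπ]; simp [hσ j, h]
    · have hz' : z j = -1 := (hz j).resolve_left h
      have hπ : π (Sum.inr j) = Sum.inl (σ j) := by
        simp [π, flip, Function.Involutive.toPerm, h]
      rw [hπ]; simp [hσ j, hz']

/-- For every `±1` vector `x`, the vector `Ã_k x` is a permutation of the vector `Ã_k 𝟙`. -/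
theorem stmt10 (k : ℕ) (x : {j : Fin (2 ^ k) // j ≠ 0} → ℝ)
    (hx : ∀ j, x j = 1 ∨ x j = -1) :
    ∃ σ : Equiv.Perm (Fin (2 ^ k)),
      ∀ i, (haarTilde k).mulVec x i = (haarTilde k).mulVec (fun _ => 1) (σ i) := by
  rw [haarTilde_mulVec, haarTilde_mulVec, extVec_ones]
  apply main_lemma
  · simp [extVec]
  · intro j hj
    simp only [extVec, dif_neg hj]
    exact hx _
end

section
/- For every integer k ≥ 0, disc(A_k^±) ≥ disc(A_k)/2, where A_k^± is the 2^{k+1} × 2^k matrix obtained by stacking A_k^+ on top of A_k^-. In particular, disc(A_k^±) ≥ k/2. -/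
open scoped Kronecker

/-- The `2^(k+1) × 2^k` matrix `A_k^±` obtained by stacking `haarPos k` on top of `haarNeg k`. -/
noncomputable def haarPM (k : ℕ) : Matrix (Fin (2 ^ (k + 1))) (Fin (2 ^ k)) ℝ :=
  Matrix.reindex
    ((finSumFinEquiv (m := 2 ^ k) (n := 2 ^ k)).trans (finCongr (by rw [pow_succ, mul_two])))
    (Equiv.refl (Fin (2 ^ k)))
    (Matrix.of (Sum.elim (fun i j => haarPos k i j) (fun i j => haarNeg k i j)))

noncomputable def E (k : ℕ) : (Fin (2 ^ k) ⊕ Fin (2 ^ k)) ≃ Fin (2 ^ (k + 1)) :=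
  (finSumFinEquiv (m := 2 ^ k) (n := 2 ^ k)).trans (finCongr (by rw [pow_succ, mul_two]))

lemma haar_succ_apply (k : ℕ) (s t : Fin (2 ^ k) ⊕ Fin (2 ^ k)) :
    haar (k + 1) (E k s) (E k t) =
      Matrix.fromBlocks (haar k) 1 (haar k) (-1) s t := by
  simp [haar, E, Matrix.reindex_apply]

lemma haar_mem (k : ℕ) (i j : Fin (2 ^ k)) :
    haar k i j = 1 ∨ haar k i j = -1 ∨ haar k i j = 0 := by
  induction k with
  | zero => left; rfl
  | succ k ih =>
    obtain ⟨s, rfl⟩ := (E k).surjective i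
    obtain ⟨t, rfl⟩ := (E k).surjective j
    rw [haar_succ_apply]
    rcases s with a | a <;> rcases t with b | b <;>
      simp [Matrix.fromBlocks, Matrix.one_apply] <;>
      first
        | exact ih a b
        | (split <;> tauto)

lemma haar_succ_mulVec (k : ℕ) (x : Fin (2 ^ (k + 1)) → ℝ) (s : Fin (2 ^ k) ⊕ Fin (2 ^ k)) :
    (haar (k + 1)).mulVec x (E k s) =
      (Matrix.fromBlocks (haar k) 1 (haar k) (-1)).mulVec (x ∘ E k) s := by
  simp only [Matrix.mulVec, dotProduct]
  rw [← (E k).sum_comp (fun j => haar (k + 1) (E k s) j * x j)]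
  exact Finset.sum_congr rfl fun t _ => by rw [haar_succ_apply]; rfl

lemma comp_E_eq (k : ℕ) (x : Fin (2 ^ (k + 1)) → ℝ) :
    x ∘ E k = Sum.elim (fun i => x (E k (Sum.inl i))) (fun i => x (E k (Sum.inr i))) := by
  funext t; cases t <;> rfl

lemma haar_lb (k : ℕ) (x : Fin (2 ^ k) → ℝ) (hx : ∀ j, x j = 1 ∨ x j = -1) :
    (k : ℝ) ≤ ‖(haar k).mulVec x‖ := by
  induction k with
  | zero => simpa using norm_nonneg _
  | succ k ih =>
    set y : Fin (2 ^ k) → ℝ := fun i => x (E k (Sum.inl i)) with hy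
    set z : Fin (2 ^ k) → ℝ := fun i => x (E k (Sum.inr i)) with hz
    set v := (haar k).mulVec y with hv
    obtain ⟨i, -, hi⟩ := Finset.exists_max_image Finset.univ (fun i => |v i|) ⟨0, Finset.mem_univ 0⟩
    have hvle : ‖v‖ ≤ |v i| := by
      rw [pi_norm_le_iff_of_nonneg (abs_nonneg _)]
      intro j; simpa using hi j (Finset.mem_univ j)
    have hzi : z i = 1 ∨ z i = -1 := hx _
    have hyv : (k : ℝ) ≤ ‖v‖ := ih y (fun j => hx _)
    have htop : (haar (k + 1)).mulVec x (E k (Sum.inl i)) = v i + z i := by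
      rw [haar_succ_mulVec, comp_E_eq, Matrix.fromBlocks_mulVec]
      simp [hv]
      rfl
    have hbot : (haar (k + 1)).mulVec x (E k (Sum.inr i)) = v i - z i := by
      rw [haar_succ_mulVec, comp_E_eq, Matrix.fromBlocks_mulVec]
      simp [hv, sub_eq_add_neg, Matrix.neg_mulVec]
      rfl
    have key : |v i| + 1 ≤ |v i + z i| ∨ |v i| + 1 ≤ |v i - z i| := by
      rcases le_total 0 (v i) with h | h <;> rcases hzi with h1 | h1
      · left; rw [h1, abs_of_nonneg h, abs_of_nonneg (by linarith)]
      · right; rw [h1, abs_of_nonneg h, show v i - -1 = v i + 1 by ring,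
          abs_of_nonneg (by linarith)]
      · right; rw [h1, abs_of_nonpos h, abs_of_nonpos (by linarith)]; linarith
      · left; rw [h1, abs_of_nonpos h, abs_of_nonpos (by linarith)]; linarith
    push_cast
    rcases key with key | key
    · calc ((k : ℝ) + 1) ≤ |v i| + 1 := by linarith
        _ ≤ |v i + z i| := key
        _ ≤ ‖(haar (k + 1)).mulVec x‖ := by
            rw [← htop, ← Real.norm_eq_abs]; exact norm_le_pi_norm _ _
      -- push_cast issue maybe
    · calc ((k : ℝ) + 1) ≤ |v i| + 1 := by linarith
        _ ≤ |v i - z i| := key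
        _ ≤ ‖(haar (k + 1)).mulVec x‖ := by
            rw [← hbot, ← Real.norm_eq_abs]; exact norm_le_pi_norm _ _




lemma haar_eq_pos_sub_neg (k : ℕ) : haar k = haarPos k - haarNeg k := by
  funext i j
  rcases haar_mem k i j with h | h | h <;>
    simp [haarPos, haarNeg, Matrix.sub_apply, h] <;> norm_num

lemma haarPM_apply (k : ℕ) (s : Fin (2 ^ k) ⊕ Fin (2 ^ k)) (j : Fin (2 ^ k)) :
    haarPM k (E k s) j =
      Sum.elim (fun i j => haarPos k i j) (fun i j => haarNeg k i j) s j := by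
  simp [haarPM, E, Matrix.reindex_apply]

lemma haarPM_mulVec (k : ℕ) (x : Fin (2 ^ k) → ℝ) (s : Fin (2 ^ k) ⊕ Fin (2 ^ k)) :
    (haarPM k).mulVec x (E k s) =
      Sum.elim ((haarPos k).mulVec x) ((haarNeg k).mulVec x) s := by
  cases s <;>
    simp only [Matrix.mulVec, dotProduct, haarPM_apply, Sum.elim_inl, Sum.elim_inr]

lemma norm_haar_le (k : ℕ) (x : Fin (2 ^ k) → ℝ) :
    ‖(haar k).mulVec x‖ ≤ 2 * ‖(haarPM k).mulVec x‖ := by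
  rw [pi_norm_le_iff_of_nonneg (by positivity)]
  intro i
  have h1 : (haar k).mulVec x i = (haarPos k).mulVec x i - (haarNeg k).mulVec x i := by
    rw [haar_eq_pos_sub_neg, Matrix.sub_mulVec]; rfl
  have h2 : |(haarPos k).mulVec x i| ≤ ‖(haarPM k).mulVec x‖ := by
    rw [← Real.norm_eq_abs, show (haarPos k).mulVec x i
        = (haarPM k).mulVec x (E k (Sum.inl i)) by rw [haarPM_mulVec]; rfl]
    exact norm_le_pi_norm _ _
  have h3 : |(haarNeg k).mulVec x i| ≤ ‖(haarPM k).mulVec x‖ := by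
    rw [← Real.norm_eq_abs, show (haarNeg k).mulVec x i
        = (haarPM k).mulVec x (E k (Sum.inr i)) by rw [haarPM_mulVec]; rfl]
    exact norm_le_pi_norm _ _
  rw [Real.norm_eq_abs, h1]
  calc |(haarPos k).mulVec x i - (haarNeg k).mulVec x i|
      ≤ |(haarPos k).mulVec x i| + |(haarNeg k).mulVec x i| := abs_sub _ _
    _ ≤ 2 * ‖(haarPM k).mulVec x‖ := by linarith

/-- For every `k ≥ 0`, `disc (A_k^±) ≥ disc (A_k) / 2`; in particular `disc (A_k^±) ≥ k/2`. -/
theorem stmt13 (k : ℕ) :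
    disc (haar k) / 2 ≤ disc (haarPM k) ∧ (k : ℝ) / 2 ≤ disc (haarPM k) := by
  have hbddH : BddBelow { t | ∃ x : Fin (2 ^ k) → ℝ,
      (∀ j, x j = 1 ∨ x j = -1) ∧ t = ‖(haar k).mulVec x‖ } :=
    ⟨0, by rintro t ⟨x, hx, rfl⟩; exact norm_nonneg _⟩
  have hne : ∃ t, ∃ x : Fin (2 ^ k) → ℝ,
      (∀ j, x j = 1 ∨ x j = -1) ∧ t = ‖(haarPM k).mulVec x‖ :=
    ⟨_, fun _ => 1, fun _ => Or.inl rfl, rfl⟩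
  have h1 : disc (haar k) / 2 ≤ disc (haarPM k) := by
    apply le_csInf hne
    rintro t ⟨x, hx, rfl⟩
    have hd : disc (haar k) ≤ ‖(haar k).mulVec x‖ := csInf_le hbddH ⟨x, hx, rfl⟩
    have := norm_haar_le k x
    linarith
  have hneH : Set.Nonempty { t | ∃ x : Fin (2 ^ k) → ℝ,
      (∀ j, x j = 1 ∨ x j = -1) ∧ t = ‖(haar k).mulVec x‖ } :=
    ⟨_, fun _ => 1, fun _ => Or.inl rfl, rfl⟩
  have h2 : (k : ℝ) ≤ disc (haar k) := by
    apply le_csInf hneH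
    rintro t ⟨x, hx, rfl⟩
    exact haar_lb k x hx
  exact ⟨h1, by linarith⟩
end
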